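/- arXiv:1707.04351 — 8 statements merged into one kernel-verified Lean document; each statement's English description precedes it below -/
import Mathlib

section
/- For every integer r ≥ 1 and every integer k ≥ 0, the generating function of the sequence n ↦ N(n,r,k) is given by ∑_{n=0}^∞ N(n,r,k) x^n = x^{kr} · ((1 - x)/(1 - 2x + x^r - x^{r+1}))^{k+1}; equivalently, as formal power series over ℤ, (1 - 2x + x^r - x^{r+1})^{k+1} · ∑_{n=0}^∞ N(n,r,k) x^n = x^{kr} · (1 - x)^{k+1}. -/
/-- The list of maximal runs of a binary word. -/
def runs (w : List Bool) : List (List Bool) := w.splitBy (· == ·)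

/-- The number of maximal runs of length `r` in a binary word. -/
def runCount (w : List Bool) (r : ℕ) : ℕ :=
  ((runs w).filter (fun g => g.length = r)).length

/-- The number of maximal runs of 1s of length `r` in a binary word. -/
def oneRunCount (w : List Bool) (r : ℕ) : ℕ :=
  ((runs w).filter (fun g => g.length = r ∧ g.head? = some true)).length

/-- `N n r k`: the number of binary words of length `n` that begin with `0`
(the empty word counts when `n = 0`) and contain exactly `k` maximal runs of length `r`. -/
def N (n r k : ℕ) : ℕ :=
  Fintype.card {w : Fin n → Bool //
    (List.ofFn w).head? ≠ some true ∧ runCount (List.ofFn w) r = k}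

/-- `M n r k`: the number of binary words of length `n` that begin with `0`
and contain exactly `k` maximal runs of 1s of length `r`. -/
def M (n r k : ℕ) : ℕ :=
  Fintype.card {w : Fin n → Bool //
    (List.ofFn w).head? ≠ some true ∧ oneRunCount (List.ofFn w) r = k}



def wordOf : List ℕ → Bool → List Bool
  | [], _ => []
  | a :: l, b => (List.replicate a b) ++ wordOf l (!b)

theorem splitBy_loop_append {α : Type*} {r : α → α → Bool} {l : List α} {a : α} {g : List α}
    (gs : List (List α)) : List.splitBy.loop r l a g gs
      = gs.reverse ++ List.splitBy.loop r l a g [] := by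
  induction l generalizing a g gs with
  | nil => simp [List.splitBy.loop]
  | cons b l IH =>
    simp_rw [List.splitBy.loop]
    split <;> rw [IH]
    conv_rhs => rw [IH]
    simp

theorem splitBy_loop_rep (b : Bool) (t : List Bool)
    (ht : t.head? ≠ some b) :
    ∀ (m : ℕ) (g : List Bool),
      List.splitBy.loop (· == ·) (List.replicate m b ++ t) b g []
        = ((b :: g).reverse ++ List.replicate m b) :: List.splitBy (· == ·) t := by
  intro m
  induction m with
  | zero =>
    intro g
    cases t with
    | nil => simp [List.splitBy.loop, List.splitBy]
    | cons c t' =>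
      have hbc : (b == c) = false := by
        simp only [List.head?_cons, ne_eq, Option.some.injEq] at ht
        simpa using fun h => ht h.symm
      simp only [List.replicate, List.nil_append, List.splitBy.loop, hbc]
      rw [splitBy_loop_append [(b :: g).reverse]]
      simp [List.splitBy]
  | succ m IH =>
    intro g
    have h1 : List.replicate (m+1) b ++ t = b :: (List.replicate m b ++ t) := by
      simp [List.replicate_succ]
    rw [h1]
    have hbb : (b == b) = true := by simp
    simp only [List.splitBy.loop, hbb]
    rw [IH (b :: g)]
    simp [List.replicate_succ']
    exact (List.replicate_succ' (n := m) (a := b)).symm ▸ (List.replicate_succ (a := b) (n := m)) ▸ rfl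

theorem runs_rep_append (b : Bool) (m : ℕ) (hm : 0 < m) (t : List Bool)
    (ht : t.head? ≠ some b) :
    runs (List.replicate m b ++ t) = List.replicate m b :: runs t := by
  obtain ⟨m, rfl⟩ : ∃ m', m = m' + 1 := ⟨m - 1, by omega⟩
  rw [runs, List.replicate_succ, List.cons_append, List.splitBy]
  rw [splitBy_loop_rep b t ht m []]
  simp [List.replicate_succ, runs]

theorem wordOf_head? (l : List ℕ) (hl : ∀ x ∈ l, 0 < x) (b : Bool) :
    (wordOf l b).head? = none ∨ (wordOf l b).head? = some b := by
  cases l with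
  | nil => left; rfl
  | cons a t =>
    right
    have ha : 0 < a := hl a (by simp)
    obtain ⟨a, rfl⟩ : ∃ a', a = a' + 1 := ⟨a - 1, by omega⟩
    simp [wordOf, List.replicate_succ]

theorem wordOf_head?_ne (l : List ℕ) (hl : ∀ x ∈ l, 0 < x) (b : Bool) :
    (wordOf l b).head? ≠ some (!b) := by
  rcases wordOf_head? l hl b with h | h <;> simp [h]

theorem runs_wordOf (l : List ℕ) (hl : ∀ x ∈ l, 0 < x) (b : Bool) :
    (runs (wordOf l b)).map List.length = l := by
  induction l generalizing b with
  | nil => rfl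
  | cons a t IH =>
    have ha : 0 < a := hl a (by simp)
    have hne : (wordOf t !b).head? ≠ some b := by
      simpa using wordOf_head?_ne t (fun x hx => hl x (by simp [hx])) (!b)
    rw [wordOf, runs_rep_append b a ha _ hne]
    simp [IH (fun x hx => hl x (by simp [hx])) (!b)]

theorem wordOf_length (l : List ℕ) (b : Bool) : (wordOf l b).length = l.sum := by
  induction l generalizing b with
  | nil => rfl
  | cons a t IH => simp [wordOf, IH]

/-- blocks of a word -/
def blocksOf (w : List Bool) : List ℕ := (runs w).map List.length

theorem head?_dropWhile_ne {α : Type*} (p : α → Bool) (l : List α) (a : α)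
    (h : (l.dropWhile p).head? = some a) : p a = false := by
  induction l with
  | nil => simp at h
  | cons x t IH =>
    rw [List.dropWhile_cons] at h
    by_cases hx : p x
    · rw [if_pos hx] at h; exact IH h
    · rw [if_neg hx] at h
      simp only [List.head?_cons, Option.some.injEq] at h
      subst h
      simpa using hx

theorem wordOf_blocksOf_aux : ∀ (n : ℕ) (w : List Bool), w.length = n →
    ∀ b : Bool, w.head? ≠ some (!b) → wordOf (blocksOf w) b = w := by
  intro n
  induction n using Nat.strong_induction_on with
  | _ n IH =>
  intro w hn b hb
  cases w with
  | nil => rfl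
  | cons c w' =>
    have hcb : c = b := by
      simp only [List.head?_cons, ne_eq, Option.some.injEq] at hb
      cases b <;> cases c <;> simp_all
    subst hcb
    set tk := (c :: w').takeWhile (· == c) with htk
    set dp := (c :: w').dropWhile (· == c) with hdp
    have hsplit : tk ++ dp = c :: w' := List.takeWhile_append_dropWhile
    have htkrep : tk = List.replicate tk.length c := by
      apply List.eq_replicate_of_mem
      intro x hx
      simpa using List.mem_takeWhile_imp hx
    have htklen : 0 < tk.length := by
      rw [htk]
      simp [List.takeWhile]
    have hdphead : dp.head? ≠ some c := by
      intro h
      have := head?_dropWhile_ne (· == c) (c :: w') c h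
      simp at this
    have hruns : runs (c :: w') = List.replicate tk.length c :: runs dp := by
      conv_lhs => rw [← hsplit, htkrep]
      exact runs_rep_append c tk.length htklen dp hdphead
    have hdplen : dp.length < n := by
      have : tk.length + dp.length = n := by
        rw [← hn, ← hsplit]; simp
      omega
    have hIH : wordOf (blocksOf dp) (!c) = dp := by
      apply IH dp.length hdplen dp rfl (!c)
      simpa using hdphead
    rw [blocksOf, hruns]
    simp only [List.map_cons]
    rw [wordOf]
    rw [← blocksOf, hIH]
    conv_rhs => rw [← hsplit, htkrep]
    simp


theorem wordOf_blocksOf (w : List Bool) (b : Bool) (hb : w.head? ≠ some (!b)) :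
    wordOf (blocksOf w) b = w :=
  wordOf_blocksOf_aux w.length w rfl b hb

def listToFn {n : ℕ} (L : List Bool) (h : L.length = n) : Fin n → Bool :=
  fun i => L.get (Fin.cast h.symm i)

theorem ofFn_listToFn {n : ℕ} (L : List Bool) (h : L.length = n) :
    List.ofFn (listToFn L h) = L := by
  subst h
  exact List.ofFn_get L

theorem count_blocksOf (w : List Bool) (r : ℕ) :
    (blocksOf w).count r = runCount w r := by
  rw [blocksOf, runCount, List.count_eq_countP, List.countP_map,
    ← List.countP_eq_length_filter]
  congr 1

theorem blocksOf_sum {n : ℕ} (w : Fin n → Bool) :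
    (blocksOf (List.ofFn w)).sum = n := by
  rw [blocksOf, ← List.length_flatten, runs, List.flatten_splitBy]
  simp

theorem blocksOf_pos (w : List Bool) {i : ℕ} (hi : i ∈ blocksOf w) : 0 < i := by
  rw [blocksOf] at hi
  obtain ⟨g, hg, rfl⟩ := List.mem_map.1 hi
  exact List.length_pos_iff.2 (List.ne_nil_of_mem_splitBy hg)

theorem wordOf_blocks_length {n : ℕ} (c : Composition n) :
    (wordOf c.blocks false).length = n := by
  rw [wordOf_length, c.blocks_sum]

def wordCompEquiv (n r k : ℕ) :
    {w : Fin n → Bool //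
      (List.ofFn w).head? ≠ some true ∧ runCount (List.ofFn w) r = k} ≃
    {c : Composition n // c.blocks.count r = k} where
  toFun p :=
    ⟨⟨blocksOf (List.ofFn p.1), fun hi => blocksOf_pos _ hi, blocksOf_sum p.1⟩,
      by simpa [count_blocksOf] using p.2.2⟩
  invFun p :=
    ⟨listToFn (wordOf p.1.blocks false) (wordOf_blocks_length p.1),
      by
        rw [ofFn_listToFn]
        constructor
        · rcases wordOf_head? p.1.blocks (fun x hx => p.1.blocks_pos hx) false with h | h <;>
            simp [h]
        · rw [← count_blocksOf, blocksOf,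
            runs_wordOf p.1.blocks (fun x hx => p.1.blocks_pos hx) false]
          exact p.2⟩
  left_inv p := by
    apply Subtype.ext
    apply List.ofFn_injective
    dsimp only
    rw [ofFn_listToFn]
    exact wordOf_blocksOf (List.ofFn p.1) false (by simpa using p.2.1)
  right_inv p := by
    apply Subtype.ext
    apply Composition.ext
    dsimp only
    rw [ofFn_listToFn, blocksOf,
      runs_wordOf p.1.blocks (fun x hx => p.1.blocks_pos hx) false]

/-- The Finset of compositions of `n` as lists. -/
def comps (n : ℕ) : Finset (List ℕ) :=
  Finset.univ.image (fun c : Composition n => c.blocks)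

theorem mem_comps {n : ℕ} {l : List ℕ} :
    l ∈ comps n ↔ l.sum = n ∧ ∀ x ∈ l, 0 < x := by
  constructor
  · rintro h
    obtain ⟨c, -, rfl⟩ := Finset.mem_image.1 h
    exact ⟨c.blocks_sum, fun x hx => c.blocks_pos hx⟩
  · rintro ⟨h1, h2⟩
    exact Finset.mem_image.2 ⟨⟨l, fun hx => h2 _ hx, h1⟩, Finset.mem_univ _, rfl⟩

theorem blocks_injective (n : ℕ) :
    Function.Injective (fun c : Composition n => c.blocks) :=
  fun _ _ h => Composition.ext h

theorem N_eq_card_comps (n r k : ℕ) :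
    N n r k = ((comps n).filter (fun l => l.count r = k)).card := by
  rw [N, ← Nat.card_eq_fintype_card, Nat.card_congr (wordCompEquiv n r k),
    Nat.card_eq_fintype_card, Fintype.card_subtype, comps, Finset.filter_image,
    Finset.card_image_of_injective _ (blocks_injective n)]

def A (r n k : ℕ) : ℕ := ((comps n).filter (fun l => l.count r = k)).card

theorem comps_zero : comps 0 = {[]} := by
  ext l
  rw [mem_comps, Finset.mem_singleton]
  constructor
  · rintro ⟨h1, h2⟩
    cases l with
    | nil => rfl
    | cons a t =>
      have := h2 a (by simp)
      simp only [List.sum_cons] at h1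
      omega
  · rintro rfl
    simp

theorem A_zero (r k : ℕ) : A r 0 k = if k = 0 then 1 else 0 := by
  rw [A, comps_zero]
  by_cases hk : k = 0
  · simp [hk, Finset.filter_singleton]
  · rw [Finset.filter_singleton]
    simp [hk, Ne.symm hk]

theorem filter_comps_eq (r n k : ℕ) (hn : 1 ≤ n) :
    (comps n).filter (fun l => l.count r = k)
      = (Finset.Icc 1 n).biUnion (fun j =>
          ((comps (n - j)).filter (fun l => (j :: l).count r = k)).image (j :: ·)) := by
  ext l
  simp only [Finset.mem_filter, Finset.mem_biUnion, Finset.mem_image, Finset.mem_Icc]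
  constructor
  · rintro ⟨hl, hcnt⟩
    rw [mem_comps] at hl
    obtain ⟨h1, h2⟩ := hl
    cases l with
    | nil => simp at h1; omega
    | cons a t =>
      have ha : 0 < a := h2 a (by simp)
      have hat : a ≤ n := by simp only [List.sum_cons] at h1; omega
      refine ⟨a, ⟨ha, hat⟩, t, ⟨?_, hcnt⟩, rfl⟩
      rw [mem_comps]
      simp only [List.sum_cons] at h1
      exact ⟨by omega, fun x hx => h2 x (by simp [hx])⟩
  · rintro ⟨j, ⟨hj1, hj2⟩, t, ⟨ht, hcnt⟩, rfl⟩
    rw [mem_comps] at ht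
    refine ⟨mem_comps.2 ⟨?_, ?_⟩, hcnt⟩
    · simp only [List.sum_cons, ht.1]; omega
    · rintro x hx
      rcases List.mem_cons.1 hx with rfl | hx
      · exact hj1
      · exact ht.2 x hx

theorem A_eq_sum (r n k : ℕ) (hn : 1 ≤ n) :
    A r n k = ∑ j ∈ Finset.Icc 1 n,
      ((comps (n - j)).filter (fun l => (j :: l).count r = k)).card := by
  rw [A, filter_comps_eq r n k hn, Finset.card_biUnion]
  · refine Finset.sum_congr rfl fun j hj => ?_
    exact Finset.card_image_of_injective _ (fun a b h => by simpa using h)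
  · intro x hx y hy hxy
    rw [Function.onFun, Finset.disjoint_left]
    rintro l hlx hly
    obtain ⟨a, -, rfl⟩ := Finset.mem_image.1 hlx
    obtain ⟨b, -, hb⟩ := Finset.mem_image.1 hly
    injection hb with h1 h2
    exact hxy h1.symm

theorem cardterm_ne (r n k j : ℕ) (hj : j ≠ r) :
    ((comps (n - j)).filter (fun l => (j :: l).count r = k)).card = A r (n - j) k := by
  rw [A]
  congr 1
  refine Finset.filter_congr fun l hl => ?_
  simp [List.count_cons, hj]

theorem cardterm_eq_zero (r n : ℕ) :
    ((comps (n - r)).filter (fun l => (r :: l).count r = 0)).card = 0 := by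
  rw [Finset.card_eq_zero, Finset.filter_eq_empty_iff]
  intro l hl
  simp [List.count_cons]

theorem cardterm_eq_succ (r n k : ℕ) :
    ((comps (n - r)).filter (fun l => (r :: l).count r = k + 1)).card = A r (n - r) k := by
  rw [A]
  congr 1
  refine Finset.filter_congr fun l hl => ?_
  simp [List.count_cons]

theorem sum_Icc_reindex (r n k : ℕ) :
    ∑ j ∈ Finset.Icc 1 n, A r (n - j) k = ∑ i ∈ Finset.range n, A r i k := by
  refine Finset.sum_bij' (fun a _ => n - a) (fun b _ => n - b) ?_ ?_ ?_ ?_ ?_ <;>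
    intro a ha <;>
    simp only [Finset.mem_Icc, Finset.mem_range] at ha ⊢ <;>
    omega

theorem A_rec_core (r n k : ℕ) (hr : 1 ≤ r) (hn : 1 ≤ n) :
    A r n k + (if r ≤ n then A r (n - r) k else 0)
      = (∑ i ∈ Finset.range n, A r i k)
        + (if r ≤ n then
            ((comps (n - r)).filter (fun l => (r :: l).count r = k)).card else 0) := by
  rw [A_eq_sum r n k hn]
  by_cases hrn : r ≤ n
  · rw [if_pos hrn, if_pos hrn]
    have hmem : r ∈ Finset.Icc 1 n := Finset.mem_Icc.2 ⟨hr, hrn⟩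
    rw [← Finset.add_sum_erase _ _ hmem]
    have herase : ∑ j ∈ (Finset.Icc 1 n).erase r,
        ((comps (n - j)).filter (fun l => (j :: l).count r = k)).card
        = ∑ j ∈ (Finset.Icc 1 n).erase r, A r (n - j) k := by
      refine Finset.sum_congr rfl fun j hj => ?_
      exact cardterm_ne r n k j (Finset.ne_of_mem_erase hj)
    rw [herase, ← sum_Icc_reindex r n k, ← Finset.add_sum_erase _ _ hmem]
    ring
  · rw [if_neg hrn, if_neg hrn, add_zero, add_zero, ← sum_Icc_reindex r n k]
    refine Finset.sum_congr rfl fun j hj => ?_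
    have hj' := Finset.mem_Icc.1 hj
    exact cardterm_ne r n k j (by omega)

theorem A_rec_zero (r n : ℕ) (hr : 1 ≤ r) (hn : 1 ≤ n) :
    A r n 0 + (if r ≤ n then A r (n - r) 0 else 0)
      = ∑ i ∈ Finset.range n, A r i 0 := by
  have := A_rec_core r n 0 hr hn
  rw [cardterm_eq_zero] at this
  simpa using this

theorem A_rec_succ (r n k : ℕ) (hr : 1 ≤ r) (hn : 1 ≤ n) :
    A r n (k + 1) + (if r ≤ n then A r (n - r) (k + 1) else 0)
      = (∑ i ∈ Finset.range n, A r i (k + 1))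
        + (if r ≤ n then A r (n - r) k else 0) := by
  have := A_rec_core r n (k + 1) hr hn
  rwa [cardterm_eq_succ] at this

open PowerSeries in
noncomputable def Fs (r k : ℕ) : PowerSeries ℤ := PowerSeries.mk fun n => (A r n k : ℤ)

open PowerSeries in
noncomputable def Hs (r k : ℕ) : PowerSeries ℤ :=
  PowerSeries.mk fun n => (∑ i ∈ Finset.range (n + 1), (A r i k : ℤ))

open PowerSeries in
theorem one_sub_X_mul_Hs (r k : ℕ) : (1 - X) * Hs r k = Fs r k := by
  ext n
  rw [sub_mul, one_mul, map_sub]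
  cases n with
  | zero => simp [Hs, Fs, PowerSeries.coeff_zero_X_mul]
  | succ m =>
    rw [PowerSeries.coeff_succ_X_mul]
    simp only [Hs, Fs, PowerSeries.coeff_mk]
    rw [Finset.sum_range_succ]
    ring

open PowerSeries in
/-- `Gs r k` : the series `F r (k-1)` for `k ≥ 1`, `0` for `k = 0`. -/
noncomputable def Gs (r : ℕ) : ℕ → PowerSeries ℤ
  | 0 => 0
  | k + 1 => Fs r k

open PowerSeries in
theorem series_rec (r k : ℕ) (hr : 1 ≤ r) :
    Fs r k + X ^ r * Fs r k
      = (if k = 0 then 1 else 0) + X * Hs r k + X ^ r * Gs r k := by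
  ext n
  simp only [map_add, PowerSeries.coeff_X_pow_mul', Fs, Hs, PowerSeries.coeff_mk]
  cases n with
  | zero =>
    have h0 : ¬ (r ≤ 0) := by omega
    rw [if_neg h0, if_neg h0, PowerSeries.coeff_zero_X_mul]
    cases k with
    | zero => simp [A_zero]
    | succ m => simp [A_zero]
  | succ m =>
    rw [PowerSeries.coeff_succ_X_mul, PowerSeries.coeff_mk]
    have hone : (PowerSeries.coeff (m+1)) (if k = 0 then (1 : PowerSeries ℤ) else 0) = 0 := by
      split <;> simp
    rw [hone, zero_add]
    cases k with
    | zero =>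
      have := A_rec_zero r (m + 1) hr (by omega)
      by_cases hrm : r ≤ m + 1
      · rw [if_pos hrm] at this ⊢
        rw [if_pos hrm]
        simp only [Gs, map_zero, add_zero]
        exact_mod_cast congrArg (fun x : ℕ => (x : ℤ)) this
      · rw [if_neg hrm] at this ⊢
        rw [if_neg hrm]
        simp only [Gs, map_zero, add_zero, add_zero] at this ⊢
        exact_mod_cast congrArg (fun x : ℕ => (x : ℤ)) this
    | succ j =>
      have := A_rec_succ r (m + 1) j hr (by omega)
      by_cases hrm : r ≤ m + 1
      · simp only [if_pos hrm] at this ⊢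
        simp only [Gs, Fs, PowerSeries.coeff_mk]
        exact_mod_cast congrArg (fun x : ℕ => (x : ℤ)) this
      · simp only [if_neg hrm] at this ⊢
        simp only [add_zero] at this ⊢
        exact_mod_cast congrArg (fun x : ℕ => (x : ℤ)) this

open PowerSeries in
theorem D_mul_Fs (r k : ℕ) (hr : 1 ≤ r) :
    (1 - 2 * X + X ^ r - X ^ (r + 1) : PowerSeries ℤ) * Fs r k
      = (if k = 0 then (1 - X : PowerSeries ℤ) else 0) + X ^ r * (1 - X) * Gs r k := by
  have h1 := one_sub_X_mul_Hs r k
  have h2 := series_rec r k hr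
  by_cases hk : k = 0
  · simp only [if_pos hk] at h2 ⊢
    linear_combination (1 - X : PowerSeries ℤ) * h2 + X * h1
  · simp only [if_neg hk] at h2 ⊢
    linear_combination (1 - X : PowerSeries ℤ) * h2 + X * h1

open PowerSeries in
theorem genFun_A (r k : ℕ) (hr : 1 ≤ r) :
    (1 - 2 * X + X ^ r - X ^ (r + 1) : PowerSeries ℤ) ^ (k + 1) * Fs r k
      = X ^ (k * r) * (1 - X) ^ (k + 1) := by
  induction k with
  | zero =>
    have h := D_mul_Fs r 0 hr
    simp only [if_pos rfl, Gs, mul_zero, add_zero] at h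
    simpa using h
  | succ j IH =>
    have h := D_mul_Fs r (j + 1) hr
    simp only [if_neg (Nat.succ_ne_zero j), zero_add, Gs] at h
    calc (1 - 2 * X + X ^ r - X ^ (r + 1) : PowerSeries ℤ) ^ (j + 2) * Fs r (j + 1)
        = (1 - 2 * X + X ^ r - X ^ (r + 1)) ^ (j + 1)
            * ((1 - 2 * X + X ^ r - X ^ (r + 1)) * Fs r (j + 1)) := by ring
      _ = (1 - 2 * X + X ^ r - X ^ (r + 1)) ^ (j + 1) * (X ^ r * (1 - X) * Fs r j) := by
            rw [h]
      _ = X ^ r * (1 - X) * ((1 - 2 * X + X ^ r - X ^ (r + 1)) ^ (j + 1) * Fs r j) := by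
            ring
      _ = X ^ r * (1 - X) * (X ^ (j * r) * (1 - X) ^ (j + 1)) := by rw [IH]
      _ = X ^ ((j + 1) * r) * (1 - X) ^ (j + 2) := by
            rw [add_mul, one_mul, pow_add]
            ring

theorem mk_N_eq_Fs (r k : ℕ) :
    PowerSeries.mk (fun n => (N n r k : ℤ)) = Fs r k := by
  apply PowerSeries.ext
  intro n
  rw [Fs, PowerSeries.coeff_mk, PowerSeries.coeff_mk]
  exact_mod_cast congrArg (fun x : ℕ => (x : ℤ)) (N_eq_card_comps n r k)

/-- the generating function of `n ↦ N n r k` is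
`x^(k r) ((1-x)/(1-2x+x^r-x^(r+1)))^(k+1)`, stated as an identity of formal
power series over ℤ after clearing denominators. -/
theorem genFun_N (r k : ℕ) (hr : 1 ≤ r) :
    (1 - 2 * PowerSeries.X + PowerSeries.X ^ r - PowerSeries.X ^ (r + 1) :
        PowerSeries ℤ) ^ (k + 1) * PowerSeries.mk (fun n => (N n r k : ℤ)) =
      PowerSeries.X ^ (k * r) * (1 - PowerSeries.X) ^ (k + 1) := by
  rw [mk_N_eq_Fs]
  exact genFun_A r k hr
end

section
/- For every integer r ≥ 1, the generating function of the sequence n ↦ N(n,r,0) satisfies ∑_{n=0}^∞ N(n,r,0) x^n = (1 - x)/(1 - 2x + x^r - x^{r+1}); equivalently, as formal power series over ℤ, (1 - 2x + x^r - x^{r+1}) · ∑_{n=0}^∞ N(n,r,0) x^n = 1 - x. -/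
theorem myLoop_eq_append {l : List Bool} {a : Bool} {g : List Bool}
    (gs : List (List Bool)) :
    List.splitBy.loop (· == ·) l a g gs = gs.reverse ++ List.splitBy.loop (· == ·) l a g [] := by
  induction l generalizing a g gs with
  | nil => simp [List.splitBy.loop]
  | cons b l IH =>
    simp_rw [List.splitBy.loop]
    split <;> rw [IH]
    conv_rhs => rw [IH]
    simp

theorem splitBy_loop_eq (l : List Bool) (a : Bool) (g : List Bool) (gs : List (List Bool))
    (hg : ∀ x ∈ g, x = a) :
    List.splitBy.loop (· == ·) l a g gs =
      gs.reverse ++ (g.reverse ++ a :: l.takeWhile (· == a)) ::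
        List.splitBy (· == ·) (l.dropWhile (· == a)) := by
  induction l generalizing a g gs with
  | nil => simp [List.splitBy.loop]
  | cons b l IH =>
    rw [List.splitBy.loop]
    by_cases hab : a = b
    · subst hab
      simp only [beq_self_eq_true]
      rw [IH a (a :: g) gs (by simpa using hg), List.takeWhile_cons, List.dropWhile_cons]
      simp
    · have h1 : (a == b) = false := by simp [hab]
      have h2 : (b == a) = false := by simp [Ne.symm hab]
      simp only [h1]
      rw [myLoop_eq_append]
      have : List.splitBy.loop (· == ·) l b [] [] = List.splitBy (· == ·) (b :: l) := rfl
      rw [this, List.takeWhile_cons, List.dropWhile_cons, h2]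
      simp

theorem splitBy_cons (a : Bool) (l : List Bool) :
    List.splitBy (· == ·) (a :: l) =
      (a :: l.takeWhile (· == a)) :: List.splitBy (· == ·) (l.dropWhile (· == a)) := by
  have : List.splitBy (· == ·) (a :: l) = List.splitBy.loop (· == ·) l a [] [] := rfl
  rw [this, splitBy_loop_eq l a [] [] (by simp)]
  simp

theorem takeWhile_rep (b : Bool) (k : ℕ) (l : List Bool) (hl : l.head? ≠ some b) :
    (List.replicate k b ++ l).takeWhile (· == b) = List.replicate k b := by
  induction k with
  | zero =>
    simp only [List.replicate_zero, List.nil_append]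
    cases l with
    | nil => rfl
    | cons c m =>
      have : c ≠ b := by simpa using hl
      simp [List.takeWhile_cons, this]
  | succ k IH => simp [List.replicate_succ, List.takeWhile_cons, IH]

theorem dropWhile_rep (b : Bool) (k : ℕ) (l : List Bool) (hl : l.head? ≠ some b) :
    (List.replicate k b ++ l).dropWhile (· == b) = l := by
  induction k with
  | zero =>
    simp only [List.replicate_zero, List.nil_append]
    cases l with
    | nil => rfl
    | cons c m =>
      have : c ≠ b := by simpa using hl
      simp [List.dropWhile_cons, this]
  | succ k IH => simp [List.replicate_succ, List.dropWhile_cons, IH]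

theorem splitBy_rep_append (b : Bool) (k : ℕ) (hk : 1 ≤ k) (l : List Bool)
    (hl : l.head? ≠ some b) :
    List.splitBy (· == ·) (List.replicate k b ++ l) =
      List.replicate k b :: List.splitBy (· == ·) l := by
  obtain ⟨k, rfl⟩ : ∃ m, k = m + 1 := ⟨k - 1, by omega⟩
  rw [List.replicate_succ, List.cons_append, splitBy_cons,
    takeWhile_rep b k l hl, dropWhile_rep b k l hl, ← List.replicate_succ]

theorem runs_map_not (l : List Bool) : runs (l.map not) = (runs l).map (List.map not) := by
  suffices H : ∀ n (l : List Bool), l.length = n →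
      runs (l.map not) = (runs l).map (List.map not) from H _ l rfl
  intro n
  induction n using Nat.strong_induction_on with
  | _ n IH =>
    intro l hn
    cases l with
    | nil => simp [runs]
    | cons a m =>
      have hp : ((fun x => x == !a) ∘ not) = (fun x => x == a) := by
        funext x; cases x <;> cases a <;> rfl
      rw [List.map_cons, runs, splitBy_cons, runs, splitBy_cons, List.map_cons,
        List.takeWhile_map, List.dropWhile_map, hp]
      have hlt : (List.dropWhile (fun x => x == a) m).length < n := by
        have := (List.dropWhile_sublist (l := m) (p := fun x => x == a)).length_le
        simp at hn; omega
      have := IH _ hlt (List.dropWhile (fun x => x == a) m) rfl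
      rw [runs, runs] at this
      rw [this]
      simp

theorem runCount_map_not (l : List Bool) (r : ℕ) : runCount (l.map not) r = runCount l r := by
  rw [runCount, runs_map_not, List.filter_map, List.length_map, runCount]
  congr 1
  apply List.filter_congr
  intro g _
  simp

theorem runCount_rep_append (b : Bool) (k : ℕ) (hk : 1 ≤ k) (l : List Bool)
    (hl : l.head? ≠ some b) (r : ℕ) :
    runCount (List.replicate k b ++ l) r = (if k = r then 1 else 0) + runCount l r := by
  rw [runCount, runs, splitBy_rep_append b k hk l hl, List.filter_cons]
  by_cases h : k = r <;> simp [h, runCount, runs, Nat.add_comm]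

theorem head?_map_not_ne (l : List Bool) (b : Bool) (h : l.head? ≠ some b) :
    (l.map not).head? ≠ some (!b) := by
  rw [List.head?_map]
  cases hl : l.head? with
  | none => simp
  | some a =>
    have : a ≠ b := fun e => h (by rw [hl, e])
    simp [Option.map_some]
    cases a <;> cases b <;> simp_all

/-- the reassembled word -/
def piece (n : ℕ) (j : Fin (n+1)) (w' : Fin (n - j.1) → Bool) : Fin (n+1) → Bool :=
  fun i => if h : i.1 < j.1 + 1 then false else !(w' ⟨i.1 - (j.1+1), by omega⟩)

theorem ofFn_piece (n : ℕ) (j : Fin (n+1)) (w' : Fin (n - j.1) → Bool) :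
    List.ofFn (piece n j w') =
      List.replicate (j.1+1) false ++ (List.ofFn w').map not := by
  have hj : j.1 ≤ n := by omega
  apply List.ext_getElem
  · simp; omega
  · intro i h1 h2
    simp only [List.getElem_ofFn]
    by_cases hij : i < j.1 + 1
    · rw [List.getElem_append_left (by simpa using hij)]
      simp [piece, hij]
    · have hi' : i - (j.1+1) < ((List.ofFn w').map not).length := by
        simp at h2 ⊢; omega
      rw [List.getElem_append_right (by simpa using hij)]
      simp only [List.getElem_map, List.getElem_ofFn, piece]
      rw [dif_neg hij]
      simp

theorem ofFn_inj {n : ℕ} {f g : Fin n → Bool} (h : List.ofFn f = List.ofFn g) : f = g :=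
  List.ofFn_inj.mp h

theorem N_succ (r n : ℕ) :
    N (n+1) r 0 = ∑ j ∈ Finset.range (n+1), if j + 1 = r then 0 else N (n - j) r 0 := by
  classical
  set f : (Σ j : Fin (n+1), {w' : Fin (n - j.1) → Bool //
      ((List.ofFn w').head? ≠ some true ∧ runCount (List.ofFn w') r = 0) ∧ j.1 + 1 ≠ r}) →
      {w : Fin (n+1) → Bool //
        (List.ofFn w).head? ≠ some true ∧ runCount (List.ofFn w) r = 0} := fun x =>
    ⟨piece n x.1 x.2.1, by
      obtain ⟨j, w', ⟨⟨hh, hc⟩, hjr⟩⟩ := x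
      rw [ofFn_piece]
      have hd : ((List.ofFn w').map not).head? ≠ some false :=
        head?_map_not_ne _ true hh
      constructor
      · rw [List.head?_append_of_ne_nil] <;> simp [List.replicate_succ]
      · rw [runCount_rep_append false (j.1+1) (by omega) _ hd, runCount_map_not, hc,
          if_neg hjr]⟩
  have hinj : Function.Injective f := by
    rintro ⟨j₁, w₁, h₁⟩ ⟨j₂, w₂, h₂⟩ h
    have hl : List.ofFn (piece n j₁ w₁) = List.ofFn (piece n j₂ w₂) := by
      have := congrArg Subtype.val h
      simpa [f] using congrArg List.ofFn this
    rw [ofFn_piece, ofFn_piece] at hl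
    have hd₁ : ((List.ofFn w₁).map not).head? ≠ some false := head?_map_not_ne _ true h₁.1.1
    have hd₂ : ((List.ofFn w₂).map not).head? ≠ some false := head?_map_not_ne _ true h₂.1.1
    have hj : j₁ = j₂ := by
      have t1 := takeWhile_rep false (j₁.1+1) _ hd₁
      have t2 := takeWhile_rep false (j₂.1+1) _ hd₂
      rw [← hl] at t2
      have : List.replicate (j₁.1+1) (false : Bool) = List.replicate (j₂.1+1) false := by
        rw [← t1, ← t2]
      have := congrArg List.length this
      simp at this
      exact Fin.ext this
    subst hj
    have hw : w₁ = w₂ := by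
      have := List.append_cancel_left hl
      have := congrArg (List.map not) this
      simp only [List.map_map] at this
      rw [show (not ∘ not) = id from funext fun x => by simp, List.map_id, List.map_id] at this
      exact ofFn_inj this
    subst hw
    rfl
  have hsurj : Function.Surjective f := by
    rintro ⟨w, hw⟩
    set l : List Bool := List.ofFn w with hldef
    have hlen : l.length = n + 1 := by simp [hldef]
    have hhead : l.head? = some (w 0) := by rw [hldef, List.ofFn_succ]; rfl
    have hw0 : w 0 = false := by
      have h1 : some (w 0) ≠ some true := hhead ▸ hw.1
      simpa using h1
    set t := (l.takeWhile (· == false)).length with htdef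
    set d := l.dropWhile (· == false) with hddef
    have htw : l.takeWhile (· == false) = List.replicate t false := by
      rw [htdef]
      exact List.eq_replicate_of_mem (fun b hb => by simpa using List.mem_takeWhile_imp hb)
    have hsplit : List.replicate t false ++ d = l := by
      rw [← htw, hddef, List.takeWhile_append_dropWhile]
    have ht1 : 1 ≤ t := by
      have : l = w 0 :: List.ofFn (fun i => w i.succ) := by rw [hldef, List.ofFn_succ]
      rw [htdef, this, hw0, List.takeWhile_cons]
      simp
    have hd : d.head? ≠ some false := by
      intro hcon
      have hdne : d ≠ [] := by intro e; rw [e] at hcon; simp at hcon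
      have := List.head_dropWhile_not (· == false) (l := l) hdne
      rw [List.head?_eq_head hdne] at hcon
      simp_all
    have hlend : t + d.length = n + 1 := by
      have := congrArg List.length hsplit
      simpa [hlen] using this
    have hrc : (if t = r then 1 else 0) + runCount d r = 0 := by
      rw [← runCount_rep_append false t ht1 d hd r, hsplit]
      exact hw.2
    have htr : t ≠ r := by intro e; rw [if_pos e] at hrc; omega
    have hrd : runCount d r = 0 := by omega
    have hjlt : t - 1 < n + 1 := by omega
    set j : Fin (n+1) := ⟨t - 1, hjlt⟩ with hjdef
    have hdlen : d.length = n - j.1 := by simp [hjdef]; omega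
    set w' : Fin (n - j.1) → Bool := fun i => !(d[i.1]'(by omega)) with hw'def
    have hofn : List.ofFn w' = d.map not := by
      apply List.ext_getElem
      · simp [hdlen]
      · intro i h1 h2
        simp [hw'def]
    have hmem : ((List.ofFn w').head? ≠ some true ∧ runCount (List.ofFn w') r = 0)
        ∧ j.1 + 1 ≠ r := by
      refine ⟨⟨?_, ?_⟩, ?_⟩
      · rw [hofn]
        exact head?_map_not_ne d false hd
      · rw [hofn, runCount_map_not]
        exact hrd
      · simpa [hjdef, Nat.sub_add_cancel ht1] using htr
    refine ⟨⟨j, ⟨w', hmem⟩⟩, ?_⟩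
    apply Subtype.ext
    apply ofFn_inj
    show List.ofFn (piece n j w') = List.ofFn w
    rw [ofFn_piece, hofn, List.map_map,
      show (not ∘ not) = id from funext fun x => by simp, List.map_id]
    rw [show j.1 + 1 = t by simp [hjdef]; omega]
    rw [hsplit, hldef]
  have hbij : Function.Bijective f := ⟨hinj, hsurj⟩
  have hcard := Fintype.card_of_bijective hbij
  rw [N, ← hcard, Fintype.card_sigma]
  rw [← Fin.sum_univ_eq_sum_range (fun j => if j + 1 = r then 0 else N (n - j) r 0) (n+1)]
  apply Finset.sum_congr rfl
  intro j _
  by_cases hjr : j.1 + 1 = r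
  · rw [if_pos hjr]
    apply Fintype.card_eq_zero_iff.mpr
    exact ⟨fun x => x.2.2 hjr⟩
  · rw [if_neg hjr]
    rw [N]
    apply Fintype.card_congr
    exact Equiv.subtypeEquivRight (fun x => by tauto)

theorem N_zero (r : ℕ) : N 0 r 0 = 1 := by
  rw [N, Fintype.card_eq_one_iff]
  refine ⟨⟨fun i => i.elim0, ?_⟩, ?_⟩
  · constructor <;> simp [runCount, runs]
  · rintro ⟨y, hy⟩
    apply Subtype.ext
    funext i
    exact i.elim0

theorem key (r : ℕ) (hr : 1 ≤ r) (n : ℕ) :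
    (N (n+1) r 0 : ℤ) = (∑ j ∈ Finset.range (n+1), (N j r 0 : ℤ))
      - (if r ≤ n + 1 then (N (n+1-r) r 0 : ℤ) else 0) := by
  have h1 : (N (n+1) r 0 : ℤ) = ∑ j ∈ Finset.range (n+1),
      ((N (n-j) r 0 : ℤ) - if j = r - 1 then (N (n-j) r 0 : ℤ) else 0) := by
    rw [N_succ]
    push_cast
    apply Finset.sum_congr rfl
    intro j _
    by_cases h : j + 1 = r
    · rw [if_pos h, if_pos (by omega)]; simp [h]
    · rw [if_neg h, if_neg (by omega)]; ring
  rw [h1, Finset.sum_sub_distrib, Finset.sum_ite_eq' (Finset.range (n+1)) (r-1)]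
  congr 1
  · exact Finset.sum_range_reflect (fun j => (N j r 0 : ℤ)) (n+1)
  · by_cases h : r ≤ n+1
    · rw [if_pos (by simp; omega), if_pos h]
      congr 2
      omega
    · rw [if_neg (by simp; omega), if_neg h]

/-- the generating function of `n ↦ N n r 0` is
`(1-x)/(1-2x+x^r-x^(r+1))`, stated over ℤ after clearing the denominator. -/
theorem genFun_N_zero (r : ℕ) (hr : 1 ≤ r) :
    (1 - 2 * PowerSeries.X + PowerSeries.X ^ r - PowerSeries.X ^ (r + 1) :
        PowerSeries ℤ) * PowerSeries.mk (fun n => (N n r 0 : ℤ)) =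
      1 - PowerSeries.X := by
  set G : PowerSeries ℤ := PowerSeries.mk (fun n => (N n r 0 : ℤ)) with hG
  have expand : (1 - 2 * PowerSeries.X + PowerSeries.X ^ r - PowerSeries.X ^ (r + 1) :
      PowerSeries ℤ) * G
      = G - (G * PowerSeries.X ^ 1 + G * PowerSeries.X ^ 1)
        + G * PowerSeries.X ^ r - G * PowerSeries.X ^ (r+1) := by ring
  rw [expand]
  ext n
  simp only [map_sub, map_add, PowerSeries.coeff_mul_X_pow', hG, PowerSeries.coeff_mk,
    PowerSeries.coeff_one, PowerSeries.coeff_X]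
  match n with
  | 0 =>
    simp [show ¬(r ≤ 0) by omega, show ¬(r+1 ≤ 0) by omega, N_zero]
  | 1 =>
    have hk := key r hr 0
    simp only [zero_add, Finset.sum_range_one] at hk
    by_cases h1 : r ≤ 1
    · have hr1 : r = 1 := by omega
      subst hr1
      norm_num at hk
      simp [hk, N_zero]
    · rw [if_neg h1] at hk
      norm_num at hk
      simp [hk, h1, show ¬(r+1 ≤ 1) by omega, N_zero]
  | (m+2) =>
    have hk1 := key r hr (m+1)
    have hk2 := key r hr m
    rw [Finset.sum_range_succ] at hk1
    have e1 : m + 2 - 1 = m + 1 := by omega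
    have e2 : m + 2 - (r+1) = m + 1 - r := by omega
    by_cases h1 : r ≤ m + 1
    · have h2 : r ≤ m + 2 := by omega
      rw [if_pos h1] at hk2
      rw [if_pos h2] at hk1
      simp only [if_pos h1, if_pos h2, if_pos (show r + 1 ≤ m + 2 by omega),
        if_pos (show 1 ≤ m + 2 by omega), e1, e2,
        if_neg (show ¬(m + 2 = 0) by omega), if_neg (show ¬(m + 2 = 1) by omega)]
      linarith
    · rw [if_neg h1] at hk2
      by_cases h2 : r ≤ m + 2
      · rw [if_pos h2] at hk1
        simp only [if_pos h2, if_neg (show ¬(r + 1 ≤ m + 2) by omega),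
          if_pos (show 1 ≤ m + 2 by omega), e1,
          if_neg (show ¬(m + 2 = 0) by omega), if_neg (show ¬(m + 2 = 1) by omega)]
        linarith
      · rw [if_neg h2] at hk1
        simp only [if_neg h2, if_neg (show ¬(r + 1 ≤ m + 2) by omega),
          if_pos (show 1 ≤ m + 2 by omega), e1,
          if_neg (show ¬(m + 2 = 0) by omega), if_neg (show ¬(m + 2 = 1) by omega)]
        linarith
end

section
/- For every integer r ≥ 2, N(r+1,r,0) = 2^r - 2; moreover N(2,1,0) = 1 (the only binary word of length 2 beginning with 0 and having no maximal run of length 1 is 00). -/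
open List
open List

lemma loop_replicate {α : Type*} {R : α → α → Bool} {a : α} (ha : R a a = true) :
    ∀ (n : ℕ) (l : List α) (g : List α) (gs : List (List α)),
      splitBy.loop R (replicate n a ++ l) a g gs = splitBy.loop R l a (replicate n a ++ g) gs := by
  intro n
  induction n with
  | zero => intro l g gs; simp
  | succ n ih =>
    intro l g gs
    rw [replicate_succ, cons_append, splitBy.loop, ha]
    show splitBy.loop R (replicate n a ++ l) a (a :: g) gs = _
    rw [ih]
    congr 1
    rw [← singleton_append, ← append_assoc, ← replicate_succ', replicate_succ, cons_append]

lemma splitBy_rep_app {α : Type*} {R : α → α → Bool} {a b : α} (ha : R a a = true)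
    (hab : R a b = false) (n : ℕ) :
    splitBy R (replicate (n+1) a ++ [b]) = [replicate (n+1) a, [b]] := by
  rw [replicate_succ, cons_append, splitBy, loop_replicate ha, splitBy.loop, hab]
  show splitBy.loop R [] b [] _ = _
  rw [splitBy.loop]
  simp [← replicate_succ', replicate_succ]

lemma splitBy_cons_rep {α : Type*} {R : α → α → Bool} {a b : α} (hb : R b b = true)
    (hab : R a b = false) (n : ℕ) :
    splitBy R (a :: replicate (n+1) b) = [[a], replicate (n+1) b] := by
  rw [splitBy, replicate_succ, splitBy.loop, hab]
  show splitBy.loop R (replicate n b) b [] [[a].reverse] = _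
  rw [← append_nil (replicate n b), loop_replicate hb, splitBy.loop]
  simp [← replicate_succ', replicate_succ]

lemma eq_replicate_of_chain' : ∀ {l : List Bool}, l.Chain' (fun x y => (x == y) = true) →
    ∀ a : Bool, l.head? = some a → l = replicate l.length a := by
  intro l
  induction l with
  | nil => simp
  | cons x t ih =>
    intro h a ha
    simp only [head?_cons, Option.some_inj] at ha
    subst ha
    cases t with
    | nil => simp
    | cons y t' =>
      simp only [Chain', isChain_cons_cons] at h
      obtain ⟨hxy, h2⟩ := h
      rw [beq_iff_eq] at hxy
      subst hxy
      rw [length_cons, replicate_succ]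
      exact congrArg _ (ih h2 x rfl)

lemma flatten_len_zero {α : Type*} {u : List (List α)} (hne : ∀ x ∈ u, x ≠ [])
    (h : u.flatten.length = 0) : u = [] := by
  cases u with
  | nil => rfl
  | cons x t =>
    exfalso
    have := hne x (mem_cons_self)
    simp only [flatten_cons, length_append, Nat.add_eq_zero] at h
    exact this (length_eq_zero_iff.mp h.1)

lemma flatten_len_one {α : Type*} {u : List (List α)} (hne : ∀ x ∈ u, x ≠ [])
    (h : u.flatten.length = 1) : ∃ b, u = [[b]] := by
  cases u with
  | nil => simp at h
  | cons x t =>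
    have hx := hne x (mem_cons_self)
    obtain ⟨c, x', rfl⟩ := exists_cons_of_ne_nil hx
    simp only [flatten_cons, cons_append, length_cons, length_append, Nat.succ_inj,
      Nat.add_eq_zero] at h
    have hx' : x' = [] := length_eq_zero_iff.mp h.1
    have ht : t = [] := flatten_len_zero (fun y hy => hne y (mem_cons_of_mem _ hy))
      (by simpa using h.2)
    exact ⟨c, by rw [hx', ht]⟩

lemma runCount_pos_cases {r : ℕ} {w : List Bool} (hw : w.length = r + 1)
    (h : runCount w r ≠ 0) :
    ∃ a b : Bool, a ≠ b ∧ (w = replicate r a ++ [b] ∨ w = b :: replicate r a) := by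
  have hne : ((runs w).filter (fun g => g.length = r)) ≠ [] := by
    intro hn
    exact h (by rw [runCount, hn]; rfl)
  obtain ⟨g, hg⟩ := exists_mem_of_ne_nil _ hne
  rw [mem_filter] at hg
  obtain ⟨hgmem, hglen⟩ := hg
  rw [decide_eq_true_eq] at hglen
  obtain ⟨s, t, hst⟩ := append_of_mem hgmem
  have hmemL : ∀ x ∈ runs w, x ≠ [] := fun x hx => ne_nil_of_mem_splitBy hx
  have hflat : (runs w).flatten = w := flatten_splitBy _ _
  have hlen : s.flatten.length + (g.length + t.flatten.length) = r + 1 := by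
    rw [← hw, ← hflat, hst]; simp
  rw [hglen] at hlen
  have hst1 : s.flatten.length + t.flatten.length = 1 := by omega
  have hs_mem : ∀ x ∈ s, x ≠ [] := fun x hx => hmemL x (by rw [hst]; exact mem_append_left _ hx)
  have ht_mem : ∀ x ∈ t, x ≠ [] := fun x hx => hmemL x (by rw [hst]; exact mem_append_right _ (mem_cons_of_mem _ hx))
  -- g is constant
  have hgchain := isChain_of_mem_splitBy hgmem
  have hgne : g ≠ [] := hmemL g hgmem
  obtain ⟨a, hga⟩ : ∃ a, g.head? = some a := ⟨g.head hgne, head?_eq_head hgne⟩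
  have hgrep : g = replicate r a := by rw [← hglen]; exact eq_replicate_of_chain' hgchain a hga
  have hchainL := isChain_getLast_head_splitBy (· == ·) w
  rw [show (w.splitBy (· == ·)) = runs w from rfl, hst] at hchainL
  rcases Nat.eq_zero_or_pos s.flatten.length with hs0 | hs1
  · -- s = [], t = [[b]]
    have hs : s = [] := flatten_len_zero hs_mem hs0
    obtain ⟨b, hb⟩ := flatten_len_one ht_mem (by omega)
    subst hs hb
    have hpair : ∃ ha hb', ((g.getLast ha == ([b] : List Bool).head hb') = false) := by
      rw [nil_append] at hchainL
      exact isChain_pair.mp hchainL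
    obtain ⟨ha, hb', hab⟩ := hpair
    have hlast : g.getLast ha = a := by
      obtain ⟨m, hm⟩ : ∃ m, r = m + 1 := by
        have := length_pos_iff.mpr hgne
        exact ⟨r - 1, by omega⟩
      have h1 : g.getLast? = some a := by
        rw [hgrep, hm, getLast?_eq_getLast (by simp), getLast_replicate_succ]
      rw [getLast?_eq_getLast ha] at h1
      exact Option.some_inj.mp h1
    rw [hlast] at hab
    simp only [head_cons] at hab
    refine ⟨a, b, ?_, Or.inl ?_⟩
    · intro hh; rw [hh] at hab; simp at hab
    · rw [← hflat, hst, hgrep]; simp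
  · -- s = [[b]], t = []
    have ht0 : t.flatten.length = 0 := by omega
    have ht : t = [] := flatten_len_zero ht_mem ht0
    obtain ⟨b, hb⟩ := flatten_len_one hs_mem (by omega)
    subst ht hb
    have hpair : ∃ hb' ha, ((([b] : List Bool).getLast hb' == g.head ha) = false) := by
      simp only [singleton_append] at hchainL
      exact isChain_pair.mp hchainL
    obtain ⟨hb', ha, hab⟩ := hpair
    have hhead : g.head ha = a := by
      have := head?_eq_head ha
      rw [hga] at this
      exact (Option.some_inj.mp this).symm
    rw [hhead] at hab
    simp only [getLast_singleton] at hab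
    refine ⟨a, b, ?_, Or.inr ?_⟩
    · intro hh; rw [hh] at hab; simp at hab
    · rw [← hflat, hst, hgrep]; simp

lemma runCount_left {r : ℕ} (hr : 2 ≤ r) : runCount (replicate r false ++ [true]) r = 1 := by
  obtain ⟨n, rfl⟩ : ∃ n, r = n + 1 := ⟨r - 1, by omega⟩
  rw [runCount, runs]
  rw [splitBy_rep_app rfl rfl]
  simp [show ¬ (1 = n + 1) by omega, show n ≠ 0 by omega]

lemma runCount_right {r : ℕ} (hr : 2 ≤ r) : runCount (false :: replicate r true) r = 1 := by
  obtain ⟨n, rfl⟩ : ∃ n, r = n + 1 := ⟨r - 1, by omega⟩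
  rw [runCount, runs]
  rw [splitBy_cons_rep rfl rfl]
  simp [show n ≠ 0 by omega]

lemma char_lemma {r : ℕ} (hr : 2 ≤ r) {w : List Bool} (hw : w.length = r + 1)
    (hh : w.head? ≠ some true) :
    runCount w r = 0 ↔ (w ≠ replicate r false ++ [true] ∧ w ≠ false :: replicate r true) := by
  constructor
  · intro h0
    constructor
    · rintro rfl; rw [runCount_left hr] at h0; exact one_ne_zero h0
    · rintro rfl; rw [runCount_right hr] at h0; exact one_ne_zero h0
  · intro ⟨h1, h2⟩
    by_contra hC
    obtain ⟨a, b, hab, hcase⟩ := runCount_pos_cases hw hC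
    obtain ⟨m, hm⟩ : ∃ m, r = m + 1 := ⟨r - 1, by omega⟩
    rcases hcase with hw1 | hw2
    · have hha : w.head? = some a := by
        rw [hw1, hm, replicate_succ, cons_append, head?_cons]
      rw [hha] at hh
      have ha : a = false := by
        cases a
        · rfl
        · exact absurd rfl hh
      have hb : b = true := by
        cases b
        · exact absurd (by rw [ha]) hab
        · rfl
      exact h1 (by rw [hw1, ha, hb])
    · have hha : w.head? = some b := by rw [hw2, head?_cons]
      rw [hha] at hh
      have hb : b = false := by
        cases b
        · rfl
        · exact absurd rfl hh
      have ha : a = true := by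
        cases a
        · exact absurd (by rw [hb]) hab
        · rfl
      exact h2 (by rw [hw2, ha, hb])

lemma ofFn_v1 : ∀ n : ℕ, List.ofFn (fun i : Fin (n+1) => decide (i.val = n))
    = replicate n false ++ [true] := by
  intro n
  induction n with
  | zero => simp
  | succ n ih =>
    rw [List.ofFn_succ]
    have h2 : (fun i : Fin (n+1) => decide ((Fin.succ i).val = n + 1))
        = (fun i : Fin (n+1) => decide (i.val = n)) := by
      funext i; simp [Fin.val_succ]
    simp only [h2, ih]
    simp [replicate_succ]

lemma ofFn_v2 (n : ℕ) : List.ofFn (fun i : Fin (n+1) => decide (i.val ≠ 0))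
    = false :: replicate n true := by
  rw [List.ofFn_succ]
  have h2 : (fun i : Fin n => decide ((Fin.succ i).val ≠ 0)) = (fun _ : Fin n => true) := by
    funext i; simp [Fin.val_succ]
  simp [h2]

def subEquiv (n : ℕ) : {w : Fin (n+1) → Bool // w 0 = false} ≃ (Fin n → Bool) where
  toFun w := fun i => w.1 i.succ
  invFun v := ⟨Fin.cons false v, by simp⟩
  left_inv w := by
    apply Subtype.ext
    funext i
    refine Fin.cases ?_ ?_ i
    · simp [w.2]
    · intro j; simp
  right_inv v := by funext i; simp

lemma card_fix (n : ℕ) :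
    (Finset.univ.filter (fun w : Fin (n+1) → Bool => w 0 = false)).card = 2 ^ n := by
  rw [← Fintype.card_subtype, Fintype.card_congr (subEquiv n)]
  simp

/-- for `r ≥ 2`, `N(r+1,r,0) = 2^r - 2`; moreover `N(2,1,0) = 1`. -/
theorem N_succ_diag :
    (∀ r : ℕ, 2 ≤ r → N (r + 1) r 0 = 2 ^ r - 2) ∧ N 2 1 0 = 1 := by
  constructor
  · intro r hr
    set v1 : Fin (r+1) → Bool := fun i => decide (i.val = r) with hv1
    set v2 : Fin (r+1) → Bool := fun i => decide (i.val ≠ 0) with hv2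
    have hofn1 : List.ofFn v1 = replicate r false ++ [true] := ofFn_v1 r
    have hofn2 : List.ofFn v2 = false :: replicate r true := ofFn_v2 r
    have hinj : Function.Injective (List.ofFn : (Fin (r+1) → Bool) → List Bool) :=
      List.ofFn_injective
    have key : ∀ w : Fin (r+1) → Bool,
        ((List.ofFn w).head? ≠ some true ∧ runCount (List.ofFn w) r = 0) ↔
          (w 0 = false ∧ (w ≠ v1 ∧ w ≠ v2)) := by
      intro w
      have hhead : (List.ofFn w).head? = some (w 0) := by rw [List.ofFn_succ, head?_cons]
      have hlen : (List.ofFn w).length = r + 1 := by simp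
      constructor
      · rintro ⟨h1, h2⟩
        have hw0 : w 0 = false := by
          rw [hhead] at h1
          cases h : w 0
          · rfl
          · exact absurd (by rw [h]) h1
        refine ⟨hw0, ?_, ?_⟩
        · rintro rfl
          rw [hofn1, runCount_left hr] at h2
          exact one_ne_zero h2
        · rintro rfl
          rw [hofn2, runCount_right hr] at h2
          exact one_ne_zero h2
      · rintro ⟨hw0, hne1, hne2⟩
        have h1 : (List.ofFn w).head? ≠ some true := by rw [hhead, hw0]; simp
        refine ⟨h1, ?_⟩
        rw [char_lemma hr hlen h1]
        exact ⟨fun hE => hne1 (hinj (by rw [hE, hofn1])),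
          fun hE => hne2 (hinj (by rw [hE, hofn2]))⟩
    rw [N, Fintype.card_subtype]
    have hset : (Finset.univ.filter (fun w : Fin (r+1) → Bool =>
          (List.ofFn w).head? ≠ some true ∧ runCount (List.ofFn w) r = 0)) =
        (Finset.univ.filter (fun w : Fin (r+1) → Bool => w 0 = false)) \ {v1, v2} := by
      ext w
      simp only [Finset.mem_filter, Finset.mem_univ, true_and, Finset.mem_sdiff,
        Finset.mem_insert, Finset.mem_singleton]
      rw [key w]
      tauto
    have hsub : ({v1, v2} : Finset (Fin (r+1) → Bool)) ⊆
        Finset.univ.filter (fun w => w 0 = false) := by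
      intro x hx
      simp only [Finset.mem_insert, Finset.mem_singleton] at hx
      rcases hx with rfl | rfl
      · simp only [Finset.mem_filter, Finset.mem_univ, true_and, hv1]
        simp [show ¬ ((0:ℕ) = r) by omega]
      · simp only [Finset.mem_filter, Finset.mem_univ, true_and, hv2]
        simp
    have hne12 : v1 ≠ v2 := by
      intro h
      have := congrFun h ⟨1, by omega⟩
      simp [hv1, hv2, show ¬ ((1:ℕ) = r) by omega] at this
    have hcard2 : ({v1, v2} : Finset (Fin (r+1) → Bool)).card = 2 := by
      rw [Finset.card_insert_of_notMem (by simpa using hne12), Finset.card_singleton]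
    rw [hset, Finset.card_sdiff_of_subset hsub, card_fix, hcard2]
  · decide
end

section
/- For all integers r ≥ 1 and n > r + 1, the number of binary words of length n - 1 that begin with 0 and contain exactly one maximal run of length r, this run being the final maximal run of the word, equals N(n-r-1,r,0). (The bijection appends to each word counted by N(n-r-1,r,0) a run of r copies of the symbol opposite to its last symbol.) -/
namespace RunAux
open List

variable {α : Type*}

theorem loop_eq_append {p : α → α → Bool} {l : List α} {a : α} {g : List α}
    (gs : List (List α)) : splitBy.loop p l a g gs = gs.reverse ++ splitBy.loop p l a g [] := by
  induction l generalizing a g gs with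
  | nil => simp [splitBy.loop]
  | cons b l IH =>
    simp_rw [splitBy.loop]
    split <;> rw [IH]
    conv_rhs => rw [IH]
    simp

theorem loop_replicate (b : Bool) : ∀ (k : ℕ) (g : List Bool),
    splitBy.loop (· == ·) (replicate k b) b g [] = [(b :: g).reverse ++ replicate k b]
  | 0, g => by simp [splitBy.loop]
  | k+1, g => by
    rw [replicate_succ, splitBy.loop]
    split
    · rw [loop_replicate b k (b :: g)]
      simp [replicate_succ]
    · next heq => simp at heq
    
theorem splitBy_replicate (b : Bool) (k : ℕ) :
    splitBy (· == ·) (replicate (k+1) b) = [replicate (k+1) b] := by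
  rw [replicate_succ]
  show splitBy.loop (· == ·) (replicate k b) b [] [] = _
  rw [loop_replicate]
  simp [replicate_succ]

theorem loop_append (p : α → α → Bool) (c : α) (l₂ : List α) :
    ∀ (l₁ : List α) (a : α) (g : List α),
      p ((a :: l₁).getLast (cons_ne_nil _ _)) c = false →
      splitBy.loop p (l₁ ++ c :: l₂) a g [] =
        splitBy.loop p l₁ a g [] ++ splitBy p (c :: l₂)
  | [], a, g, h => by
    simp only [getLast_singleton] at h
    rw [nil_append, splitBy.loop]
    split
    · next heq => rw [h] at heq; cases heq
    · rw [loop_eq_append]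
      simp [splitBy.loop]
      rfl
  | x :: l₁, a, g, h => by
    have hgl : (x :: l₁ : List α) ≠ [] := cons_ne_nil _ _
    rw [getLast_cons hgl] at h
    rw [cons_append, splitBy.loop]
    split
    · next heq =>
      rw [loop_append p c l₂ l₁ x (a :: g) h]
      conv_rhs => rw [splitBy.loop]
      rw [heq]
    · next heq =>
      rw [loop_eq_append, loop_append p c l₂ l₁ x [] h]
      have hrhs : splitBy.loop p (x :: l₁) a g [] = splitBy.loop p l₁ x [] [(a :: g).reverse] := by
        rw [splitBy.loop, heq]
      rw [hrhs, loop_eq_append [(a :: g).reverse]]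
      simp

theorem splitBy_append {p : α → α → Bool} {l₁ l₂ : List α} (h₁ : l₁ ≠ []) (h₂ : l₂ ≠ [])
    (h : p (l₁.getLast h₁) (l₂.head h₂) = false) :
    splitBy p (l₁ ++ l₂) = splitBy p l₁ ++ splitBy p l₂ := by
  obtain ⟨a, t₁, rfl⟩ := exists_cons_of_ne_nil h₁
  obtain ⟨c, t₂, rfl⟩ := exists_cons_of_ne_nil h₂
  show splitBy.loop p (t₁ ++ c :: t₂) a [] [] = splitBy.loop p t₁ a [] [] ++ splitBy p (c :: t₂)
  exact loop_append p c t₂ t₁ a [] (by simpa using h)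


theorem run_replicate : ∀ {g : List Bool}, g.Chain' (fun x y => x == y) →
    ∀ (h : g ≠ []), g = replicate g.length (g.head h)
  | [], _, h => absurd rfl h
  | [x], _, _ => rfl
  | x :: y :: t, hc, _ => by
    obtain ⟨hxy, hc'⟩ := isChain_cons_cons.mp hc
    have hy : x = y := by simpa using hxy
    have ht := run_replicate hc' (cons_ne_nil _ _)
    subst hy
    simp only [head_cons, length_cons, replicate_succ]
    exact congrArg (x :: ·) ht

theorem runs_append_replicate {r : ℕ} (hr : 1 ≤ r) {l : List Bool} {c : Bool}
    (hl : l ≠ []) (hc : l.getLast hl ≠ c) :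
    runs (l ++ List.replicate r c) = runs l ++ [List.replicate r c] := by
  obtain ⟨k, rfl⟩ : ∃ k, r = k + 1 := ⟨r - 1, by omega⟩
  rw [runs, splitBy_append hl (by simp) ?_, ← runs, splitBy_replicate]
  · simpa [replicate_succ] using hc

theorem exists_decomp {r : ℕ} (hr : 1 ≤ r) {w : List Bool} (hlen : r < w.length)
    (hlast : (runs w).getLast?.map List.length = some r) :
    ∃ (l : List Bool) (c : Bool) (hl : l ≠ []),
      w = l ++ List.replicate r c ∧ l.getLast hl ≠ c ∧
      runs w = runs l ++ [List.replicate r c] := by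
  have hgs : runs w ≠ [] := by
    intro h; rw [h] at hlast; simp at hlast
  set g := (runs w).getLast hgs with hgdef
  have hgsplit : (runs w).dropLast ++ [g] = runs w := dropLast_append_getLast hgs
  have hg_mem : g ∈ runs w := getLast_mem hgs
  have hgne : g ≠ [] := ne_nil_of_mem_splitBy hg_mem
  have hgchain : g.Chain' (fun x y => x == y) := isChain_of_mem_splitBy hg_mem
  set c := g.head hgne with hcdef
  have hgrep : g = replicate g.length c := run_replicate hgchain hgne
  have hglen : g.length = r := by
    rw [getLast?_eq_getLast hgs] at hlast
    simpa using hlast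
  have hwfl : w = (runs w).flatten := (List.flatten_splitBy _ w).symm
  set l := (runs w).dropLast.flatten with hldef
  have hw : w = l ++ g := by
    conv_lhs => rw [hwfl, ← hgsplit]
    rw [flatten_append]
    simp
    rfl
  have hlne : l ≠ [] := by
    intro h
    rw [hw, h, nil_append] at hlen
    omega
  have hdlne : (runs w).dropLast ≠ [] := by
    intro h; rw [hldef, h] at hlne; simp at hlne
  -- last element of l equals last of last group of dropLast
  set g₂ := (runs w).dropLast.getLast hdlne with hg2def
  have hg2split : (runs w).dropLast.dropLast ++ [g₂] = (runs w).dropLast :=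
    dropLast_append_getLast hdlne
  have hg2mem : g₂ ∈ runs w := by
    have : g₂ ∈ (runs w).dropLast := getLast_mem hdlne
    exact dropLast_subset _ this
  have hg2ne : g₂ ≠ [] := ne_nil_of_mem_splitBy hg2mem
  have hlast? : l.getLast? = g₂.getLast? := by
    rw [hldef, ← hg2split, flatten_append, getLast?_append]
    simp [getLast?_eq_getLast hg2ne]
  have hchain : (runs w).IsChain
      (fun a b => ∃ (ha : a ≠ []) (hb : b ≠ []), (a.getLast ha == b.head hb) = false) :=
    List.isChain_getLast_head_splitBy (· == ·) w
  rw [← hgsplit] at hchain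
  rw [isChain_append] at hchain
  obtain ⟨-, -, hrel⟩ := hchain
  obtain ⟨ha, hb, hrel'⟩ := hrel g₂ (by simp [getLast?_eq_getLast hdlne, Option.mem_some_iff, hg2def]) g (by simp)
  have hne : l.getLast hlne ≠ c := by
    have h1 : l.getLast? = some (l.getLast hlne) := getLast?_eq_getLast hlne
    have h2 : g₂.getLast? = some (g₂.getLast ha) := getLast?_eq_getLast ha
    have : l.getLast hlne = g₂.getLast ha := by
      rw [h1, h2] at hlast?; exact Option.some.inj hlast?
    rw [this]
    have : g.head hb = c := rfl
    intro hEq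
    rw [← this] at hEq
    rw [hEq] at hrel'
    simp at hrel'
  refine ⟨l, c, hlne, ?_, hne, ?_⟩
  · rw [hw]; congr 1; rw [hgrep, hglen]
  · have : w = l ++ List.replicate r c := by rw [hw]; congr 1; rw [hgrep, hglen]
    rw [this, runs_append_replicate hr hlne hne]

end RunAux

namespace RunAux
open List

def listEquiv (m : ℕ) (P : List Bool → Prop) :
    {w : Fin m → Bool // P (List.ofFn w)} ≃ {l : List Bool // l.length = m ∧ P l} where
  toFun w := ⟨List.ofFn w.1, List.length_ofFn, w.2⟩
  invFun l := ⟨fun i => l.1.get (Fin.cast l.2.1.symm i), by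
    obtain ⟨l, hl, hP⟩ := l
    subst hl
    simpa [List.ofFn_get] using hP⟩
  left_inv w := by
    apply Subtype.ext
    funext i
    simp
  right_inv l := by
    obtain ⟨l, hl, hP⟩ := l
    subst hl
    exact Subtype.ext (by simp [List.ofFn_get])

def mid (r n : ℕ) (hr : 1 ≤ r) (hn : r + 1 < n) :
    {l : List Bool // l.length = n - 1 ∧ (l.head? ≠ some true ∧ runCount l r = 1 ∧
        (runs l).getLast?.map List.length = some r)} ≃
    {l : List Bool // l.length = n - r - 1 ∧ (l.head? ≠ some true ∧ runCount l r = 0)} where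
  toFun x := ⟨x.1.take (x.1.length - r), by
    obtain ⟨w, hlen, hhead, hcnt, hlast⟩ := x
    have hrw : r < w.length := by omega
    obtain ⟨l, c, hl, hw, hne, hruns⟩ := exists_decomp hr hrw hlast
    have hwl : w.length = l.length + r := by rw [hw]; simp
    have htake : w.take (w.length - r) = l := by
      have h1 : (l ++ List.replicate r c).length - r = l.length := by
        rw [length_append, length_replicate]; omega
      rw [hw, h1, take_left]
    have hh : (l ++ List.replicate r c).head? = l.head? := by
      cases l
      · exact absurd rfl hl
      · simp
    have hcount : runCount w r = runCount l r + 1 := by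
      rw [runCount, hruns, filter_append]
      simp [runCount]
    refine ⟨?_, ?_, ?_⟩
    · rw [htake]; omega
    · rw [htake]; rw [hw, hh] at hhead; exact hhead
    · rw [htake]; omega⟩
  invFun x := ⟨x.1 ++ List.replicate r (!(x.1.getLastD false)), by
    obtain ⟨l, hlen, hhead, hcnt⟩ := x
    have hl : l ≠ [] := by
      intro h; rw [h] at hlen; simp at hlen; omega
    have hgd : l.getLastD false = l.getLast hl := by
      rw [getLastD_eq_getLast?, getLast?_eq_getLast hl]; rfl
    have hne : l.getLast hl ≠ !(l.getLastD false) := by rw [hgd]; simp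
    have hruns := runs_append_replicate hr hl hne
    refine ⟨?_, ?_, ?_, ?_⟩
    · dsimp; rw [length_append, length_replicate, hlen]; omega
    · have hh : (l ++ List.replicate r (!(l.getLastD false))).head? = l.head? := by
        cases l
        · exact absurd rfl hl
        · simp
      rw [hh]; exact hhead
    · rw [runCount, hruns, filter_append]
      have h1 : (List.filter (fun g => decide (g.length = r))
          [List.replicate r (!(l.getLastD false))]).length = 1 := by simp
      rw [length_append, h1]
      rw [runCount] at hcnt
      omega
    · rw [hruns, getLast?_concat]
      simp⟩
  left_inv x := by
    apply Subtype.ext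
    obtain ⟨w, hlen, hhead, hcnt, hlast⟩ := x
    have hrw : r < w.length := by omega
    obtain ⟨l, c, hl, hw, hne, hruns⟩ := exists_decomp hr hrw hlast
    have hwl : w.length = l.length + r := by rw [hw]; simp
    have htake : w.take (w.length - r) = l := by
      have h1 : (l ++ List.replicate r c).length - r = l.length := by
        rw [length_append, length_replicate]; omega
      rw [hw, h1, take_left]
    show w.take (w.length - r) ++
        List.replicate r (!(w.take (w.length - r)).getLastD false) = w
    rw [htake]
    have hgd : l.getLastD false = l.getLast hl := by
      rw [getLastD_eq_getLast?, getLast?_eq_getLast hl]; rfl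
    have hb : (!(l.getLastD false)) = c := by
      rw [hgd]
      revert hne
      cases l.getLast hl <;> cases c <;> simp
    show l ++ List.replicate r (!(l.getLastD false)) = w
    rw [hb, ← hw]
  right_inv x := by
    apply Subtype.ext
    obtain ⟨l, hlen, hhead, hcnt⟩ := x
    dsimp
    have h1 : (l ++ List.replicate r (!(l.getLastD false))).length - r = l.length := by
      rw [length_append, length_replicate]; omega
    rw [h1, take_left]

end RunAux


/-- for `r ≥ 1` and `n > r + 1`, the number of binary words of
length `n - 1` that begin with `0` and contain exactly one maximal run of
length `r`, this run being the final maximal run, equals `N(n-r-1,r,0)`. -/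
theorem count_final_run_exact (r n : ℕ) (hr : 1 ≤ r) (hn : r + 1 < n) :
    Fintype.card {w : Fin (n - 1) → Bool //
        (List.ofFn w).head? ≠ some true ∧ runCount (List.ofFn w) r = 1 ∧
        (runs (List.ofFn w)).getLast?.map List.length = some r} =
      N (n - r - 1) r 0 := by
  unfold N
  exact Fintype.card_congr
    ((RunAux.listEquiv (n - 1) (fun l => l.head? ≠ some true ∧ runCount l r = 1 ∧
        (runs l).getLast?.map List.length = some r)).trans
      ((RunAux.mid r n hr hn).trans
        (RunAux.listEquiv (n - r - 1) (fun l => l.head? ≠ some true ∧ runCount l r = 0)).symm))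
end

section
/- For all integers n ≥ 0, r ≥ 1, k ≥ 0: if n ≥ rk then N(n,r,k) = ∑ ∏_{i=0}^{k} N(n_i,r,0), where the sum runs over all (k+1)-tuples of nonnegative integers (n_0, n_1, …, n_k) with n_0 + n_1 + ⋯ + n_k = n - rk; and if n < rk then N(n,r,k) = 0. -/
namespace NConv

open List

/-! ### splitBy computation lemmas -/

theorem loop_eq_append {α : Type*} {r : α → α → Bool} {l : List α} {a : α} {g : List α}
    (gs : List (List α)) :
    List.splitBy.loop r l a g gs = gs.reverse ++ List.splitBy.loop r l a g [] := by
  induction l generalizing a g gs with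
  | nil => simp [List.splitBy.loop]
  | cons b l IH =>
    simp_rw [List.splitBy.loop]
    split <;> rw [IH]
    conv_rhs => rw [IH]
    simp

theorem loop_replicate (b : Bool) (t : List Bool) (ht : t.head? ≠ some b) :
    ∀ (m : ℕ) (g : List Bool),
      List.splitBy.loop (· == ·) (List.replicate m b ++ t) b g []
        = (g.reverse ++ List.replicate (m + 1) b) :: t.splitBy (· == ·) := by
  intro m
  induction m with
  | zero =>
    intro g
    cases t with
    | nil => simp [List.splitBy.loop, List.splitBy]
    | cons c t' =>
      have hbc : (b == c) = false := by
        simp only [head?, ne_eq, Option.some.injEq] at ht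
        simp [beq_eq_false_iff_ne]
        exact fun h => ht h.symm
      simp only [List.replicate, List.nil_append]
      rw [List.splitBy.loop]
      simp only [hbc]
      rw [loop_eq_append [_]]
      simp [List.splitBy, List.replicate]
  | succ m IH =>
    intro g
    rw [List.replicate_succ, List.cons_append, List.splitBy.loop]
    simp only [beq_self_eq_true]
    rw [IH (b :: g)]
    simp [List.replicate_succ, List.replicate_succ' (n := m + 1)]

theorem splitBy_replicate_append (b : Bool) (m : ℕ) (hm : 0 < m) (t : List Bool)
    (ht : t.head? ≠ some b) :
    (List.replicate m b ++ t).splitBy (· == ·)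
      = List.replicate m b :: t.splitBy (· == ·) := by
  obtain ⟨m', rfl⟩ : ∃ m', m = m' + 1 := ⟨m - 1, by omega⟩
  rw [List.replicate_succ, List.cons_append, List.splitBy]
  exact loop_replicate b t ht m' []

/-! ### words from run lengths -/

/-- Build the binary word whose runs have lengths `l`, starting with symbol `b`. -/
def word : Bool → List ℕ → List Bool
  | _, [] => []
  | b, a :: l => List.replicate a b ++ word (!b) l

theorem length_word : ∀ (b : Bool) (l : List ℕ), (word b l).length = l.sum := by
  intro b l
  induction l generalizing b with
  | nil => rfl
  | cons a l IH => simp [word, IH]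

theorem head?_word_ne (b : Bool) (l : List ℕ) (h : ∀ x ∈ l, 0 < x) :
    (word b l).head? ≠ some (!b) := by
  cases l with
  | nil => simp [word]
  | cons a l =>
    obtain ⟨a', rfl⟩ : ∃ a', a = a' + 1 := ⟨a - 1, by have := h a (by simp); omega⟩
    simp [word, List.replicate_succ]

theorem map_length_runs_word : ∀ (l : List ℕ) (b : Bool), (∀ x ∈ l, 0 < x) →
    ((word b l).splitBy (· == ·)).map List.length = l := by
  intro l
  induction l with
  | nil => intro b _; rfl
  | cons a l IH =>
    intro b h
    have ha : 0 < a := h a (by simp)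
    have ht : (word (!b) l).head? ≠ some b := by
      have := head?_word_ne (!b) l (fun x hx => h x (by simp [hx]))
      simpa using this
    rw [word, splitBy_replicate_append b a ha _ ht, List.map_cons, List.length_replicate,
      IH (!b) (fun x hx => h x (by simp [hx]))]

theorem exists_replicate_split (c : Bool) :
    ∀ l : List Bool, ∃ m t, l = List.replicate m c ++ t ∧ t.head? ≠ some c ∧
      t.length + m = l.length := by
  intro l
  induction l with
  | nil => exact ⟨0, [], by simp⟩
  | cons a l IH =>
    by_cases hac : a = c
    · subst hac
      obtain ⟨m, t, h1, h2, h3⟩ := IH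
      exact ⟨m + 1, t, by simp [List.replicate_succ, ← h1], h2, by simp; omega⟩
    · exact ⟨0, a :: l, by simp, by simpa using fun h => hac h, by simp⟩

theorem word_runs : ∀ (n : ℕ) (w : List Bool), w.length ≤ n → ∀ b, w.head? ≠ some (!b) →
    word b ((w.splitBy (· == ·)).map List.length) = w := by
  intro n
  induction n with
  | zero =>
    intro w hw b _
    have hw0 : w = [] := by
      cases w with
      | nil => rfl
      | cons a l => simp at hw
    subst hw0
    rfl
  | succ n IH =>
    intro w hw b hb
    cases w with
    | nil => rfl
    | cons c w' =>
      have hcb : c = b := by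
        cases b <;> cases c <;> simp_all
      subst hcb
      obtain ⟨m, t, h1, h2, h3⟩ := exists_replicate_split c (c :: w')
      have hm : 0 < m := by
        rcases Nat.eq_zero_or_pos m with hm0 | hm0
        · exfalso; apply h2; rw [hm0] at h1; simpa using congrArg List.head? h1.symm
        · exact hm0
      rw [h1, splitBy_replicate_append c m hm t h2, List.map_cons, List.length_replicate, word]
      congr 1
      have hlt : t.length ≤ n := by
        simp only [List.length_cons] at h3 hw
        omega
      apply IH t hlt (!c)
      simpa using h2

/-! ### the list model -/

/-- Lists of positive integers with sum `n` and exactly `k` entries equal to `r`. -/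
def CL (n r k : ℕ) : Type :=
  {l : List ℕ // (∀ x ∈ l, 0 < x) ∧ l.sum = n ∧ l.count r = k}

theorem runCount_eq_count (w : List Bool) (r : ℕ) :
    runCount w r = ((w.splitBy (· == ·)).map List.length).count r := by
  rw [runCount, runs, List.count, List.countP_map, ← List.countP_eq_length_filter]
  apply List.countP_congr
  intro g _
  simp only [Function.comp_apply]
  by_cases h : g.length = r
  · simp [h]
  · simp [h]

theorem ofFn_getD {α : Type*} (n : ℕ) (t : List α) (h : t.length = n) (d : α) :
    (List.ofFn fun i : Fin n => t.getD (i : ℕ) d) = t := by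
  subst h
  have : (fun i : Fin t.length => t.getD (i : ℕ) d) = fun i : Fin t.length => t[(i : ℕ)] := by
    funext i
    exact List.getD_eq_getElem t d i.isLt
  rw [this, List.ofFn_getElem]

/-- The word model is equivalent to the list-of-run-lengths model. -/
def wordCL (n r k : ℕ) :
    {w : Fin n → Bool //
      (List.ofFn w).head? ≠ some true ∧ runCount (List.ofFn w) r = k} ≃ CL n r k where
  toFun w := by
    refine ⟨((List.ofFn w.1).splitBy (· == ·)).map List.length, ?_, ?_, ?_⟩
    · intro x hx
      simp only [List.mem_map] at hx
      obtain ⟨g, hg, rfl⟩ := hx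
      have := List.ne_nil_of_mem_splitBy hg
      simpa [List.length_pos_iff] using this
    · rw [← List.length_flatten, List.flatten_splitBy, List.length_ofFn]
    · rw [← runCount_eq_count]; exact w.2.2
  invFun l := by
    have hlen : (word false l.1).length = n := by rw [length_word, l.2.2.1]
    refine ⟨fun i => (word false l.1).getD (i : ℕ) false, ?_, ?_⟩
    · rw [ofFn_getD n _ hlen]
      have := head?_word_ne false l.1 l.2.1
      simpa using this
    · rw [ofFn_getD n _ hlen, runCount_eq_count,
        map_length_runs_word l.1 false l.2.1, l.2.2.2]
  left_inv := by
    rintro ⟨w, h1, h2⟩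
    apply Subtype.ext
    funext i
    have hw : word false (((List.ofFn w).splitBy (· == ·)).map List.length) = List.ofFn w := by
      apply word_runs n (List.ofFn w) (by simp) false
      simpa using h1
    simp only [hw]
    rw [List.getD_eq_getElem _ _ (by simp [i.isLt]), List.getElem_ofFn]
  right_inv := by
    rintro ⟨l, h1, h2, h3⟩
    apply Subtype.ext
    have hlen : (word false l).length = n := by rw [length_word, h2]
    simp only
    rw [ofFn_getD n _ hlen, map_length_runs_word l false h1]

instance (n r k : ℕ) : Fintype (CL n r k) := Fintype.ofEquiv _ (wordCL n r k)

theorem N_eq (n r k : ℕ) : N n r k = Fintype.card (CL n r k) :=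
  Fintype.card_congr (wordCL n r k)

/-! ### vanishing -/

theorem mul_count_le_sum (r : ℕ) : ∀ l : List ℕ, r * l.count r ≤ l.sum := by
  intro l
  induction l with
  | nil => simp
  | cons a t IH =>
    by_cases h : a = r
    · subst h
      rw [List.count_cons_self, List.sum_cons, Nat.mul_succ]
      omega
    · rw [List.count_cons_of_ne h, List.sum_cons]
      omega

theorem card_CL_eq_zero {n r k : ℕ} (h : n < r * k) : Fintype.card (CL n r k) = 0 := by
  rw [Fintype.card_eq_zero_iff]
  constructor
  rintro ⟨l, h1, h2, h3⟩
  have := mul_count_le_sum r l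
  rw [h2, h3] at this
  omega

/-! ### splitting at the first run of length r -/

theorem takeWhile_dropWhile_append {α : Type*} (p : α → Bool) (x : α) (hx : p x = false) :
    ∀ (a b : List α), (∀ y ∈ a, p y = true) →
      (a ++ x :: b).takeWhile p = a ∧ (a ++ x :: b).dropWhile p = x :: b := by
  intro a
  induction a with
  | nil => intro b _; simp [List.takeWhile_cons, List.dropWhile_cons, hx]
  | cons c a IH =>
    intro b h
    have hc : p c = true := h c (by simp)
    have := IH b (fun y hy => h y (by simp [hy]))
    simp [List.takeWhile_cons, List.dropWhile_cons, hc, this.1, this.2]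

theorem exists_split (r : ℕ) (l : List ℕ) (h : r ∈ l) :
    l = l.takeWhile (· != r) ++ r :: (l.dropWhile (· != r)).tail := by
  induction l with
  | nil => cases h
  | cons a t IH =>
    by_cases har : a = r
    · subst har
      simp [List.takeWhile_cons, List.dropWhile_cons]
    · have hat : (a != r) = true := by simpa using har
      have hrt : r ∈ t := by
        rcases List.mem_cons.mp h with h' | h'
        · exact absurd h'.symm har
        · exact h'
      rw [List.takeWhile_cons, List.dropWhile_cons]
      simp only [hat, if_pos, List.cons_append]
      exact congrArg (a :: ·) (IH hrt)

theorem count_takeWhile (r : ℕ) (l : List ℕ) : (l.takeWhile (· != r)).count r = 0 := by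
  rw [List.count_eq_zero]
  intro hmem
  have := List.mem_takeWhile_imp hmem
  simp at this

theorem mk_congr' (r n k : ℕ) {A a B b : List ℕ} {s1 s2 : ℕ} (hA : A = a) (hB : B = b)
    (hs1 : a.sum = s1) (hs2 : b.sum = s2)
    {h1 : ((A.sum, B.sum) : ℕ × ℕ) ∈ Finset.HasAntidiagonal.antidiagonal (n - r)}
    {h2 : (∀ x ∈ A, 0 < x) ∧ A.sum = A.sum ∧ A.count r = 0}
    {h3 : (∀ x ∈ B, 0 < x) ∧ B.sum = B.sum ∧ B.count r = k}
    {h1' : ((s1, s2) : ℕ × ℕ) ∈ Finset.HasAntidiagonal.antidiagonal (n - r)}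
    {h2' : (∀ x ∈ a, 0 < x) ∧ a.sum = s1 ∧ a.count r = 0}
    {h3' : (∀ x ∈ b, 0 < x) ∧ b.sum = s2 ∧ b.count r = k} :
    (⟨⟨(A.sum, B.sum), h1⟩, ⟨A, h2⟩, ⟨B, h3⟩⟩ :
        Σ p : Finset.HasAntidiagonal.antidiagonal (n - r), CL p.1.1 r 0 × CL p.1.2 r k)
      = ⟨⟨(s1, s2), h1'⟩, ⟨a, h2'⟩, ⟨b, h3'⟩⟩ := by
  subst hs1; subst hs2; subst hA; subst hB; rfl

/-- A list with `k+1` entries equal to `r` splits as `a ++ r :: b` with no `r` in `a`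
and `k` entries `r` in `b`. -/
def splitEquiv (r : ℕ) (hr : 1 ≤ r) (n k : ℕ) (hrn : r ≤ n) :
    CL n r (k + 1) ≃ Σ p : Finset.HasAntidiagonal.antidiagonal (n - r), CL p.1.1 r 0 × CL p.1.2 r k where
  toFun l :=
    ⟨⟨((l.1.takeWhile (· != r)).sum, ((l.1.dropWhile (· != r)).tail).sum), by
      rw [Finset.HasAntidiagonal.mem_antidiagonal]
      have hmem : r ∈ l.1 := by
        rw [← List.count_pos_iff, l.2.2.2]; omega
      have hsplit := exists_split r l.1 hmem
      have hsum := l.2.2.1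
      conv_lhs at hsum => rw [hsplit]
      simp only [List.sum_append, List.sum_cons] at hsum
      omega⟩,
      ⟨l.1.takeWhile (· != r), by
        refine ⟨fun x hx => l.2.1 x (List.takeWhile_sublist _ |>.mem hx), rfl, ?_⟩
        exact count_takeWhile r l.1⟩,
      ⟨(l.1.dropWhile (· != r)).tail, by
        refine ⟨fun x hx =>
          l.2.1 x (((List.tail_sublist _).trans (List.dropWhile_sublist _)).mem hx), rfl, ?_⟩
        have hmem : r ∈ l.1 := by
          rw [← List.count_pos_iff, l.2.2.2]; omega
        have hsplit := exists_split r l.1 hmem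
        have hcount := l.2.2.2
        conv_lhs at hcount => rw [hsplit]
        rw [List.count_append, List.count_cons_self] at hcount
        have := count_takeWhile r l.1
        omega⟩⟩
  invFun x := ⟨x.2.1.1 ++ r :: x.2.2.1, by
    obtain ⟨⟨⟨s1, s2⟩, hp⟩, ⟨a, ha1, ha2, ha3⟩, ⟨b, hb1, hb2, hb3⟩⟩ := x
    rw [Finset.HasAntidiagonal.mem_antidiagonal] at hp
    have ha2' : a.sum = s1 := ha2
    have hb2' : b.sum = s2 := hb2
    have ha3' : a.count r = 0 := ha3
    have hb3' : b.count r = k := hb3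
    refine ⟨?_, ?_, ?_⟩
    · intro x hx
      rcases List.mem_append.mp hx with h | h
      · exact ha1 x h
      · rcases List.mem_cons.mp h with h | h
        · omega
        · exact hb1 x h
    · simp only [List.sum_append, List.sum_cons]
      simp only at hp
      omega
    · show List.count r (a ++ r :: b) = k + 1
      rw [List.count_append, List.count_cons_self, ha3', hb3']
      omega⟩
  left_inv := by
    rintro ⟨l, h1, h2, h3⟩
    apply Subtype.ext
    have hmem : r ∈ l := by
      rw [← List.count_pos_iff, h3]; omega
    exact (exists_split r l hmem).symm
  right_inv := by
    rintro ⟨⟨⟨s1, s2⟩, hp⟩, ⟨a, ha⟩, ⟨b, hb⟩⟩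
    have ha3 : a.count r = 0 := ha.2.2
    have hra : ∀ y ∈ a, (y != r) = true := by
      intro y hy
      have hyr : y ≠ r := by
        intro hh; subst hh
        rw [List.count_eq_zero] at ha3
        exact ha3 hy
      simpa using hyr
    obtain ⟨htw, hdw⟩ := takeWhile_dropWhile_append (fun y => y != r) r (by simp) a b hra
    have hdwt : ((a ++ r :: b).dropWhile (fun y => y != r)).tail = b := by rw [hdw]; rfl
    exact mk_congr' r n k htw hdwt ha.2.1 hb.2.1

/-! ### the recurrence and the convolution formula -/

theorem card_rec (r : ℕ) (hr : 1 ≤ r) (n k : ℕ) (hrn : r ≤ n) :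
    Fintype.card (CL n r (k + 1)) =
      ∑ p ∈ Finset.HasAntidiagonal.antidiagonal (n - r),
        Fintype.card (CL p.1 r 0) * Fintype.card (CL p.2 r k) := by
  rw [Fintype.card_congr (splitEquiv r hr n k hrn), Fintype.card_sigma]
  simp_rw [Fintype.card_prod]
  rw [← Finset.sum_coe_sort (Finset.HasAntidiagonal.antidiagonal (n - r))
    (fun p => Fintype.card (CL p.1 r 0) * Fintype.card (CL p.2 r k))]

theorem sum_adT_succ {M : Type*} [AddCommMonoid M] (k m : ℕ) (g : (Fin (k + 1) → ℕ) → M) :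
    ∑ t ∈ Finset.Nat.antidiagonalTuple (k + 1) m, g t
      = ∑ p ∈ Finset.HasAntidiagonal.antidiagonal m, ∑ t ∈ Finset.Nat.antidiagonalTuple k p.2,
          g (Fin.cons p.1 t) := by
  rw [Finset.sum_sigma' (Finset.HasAntidiagonal.antidiagonal m) (fun p => Finset.Nat.antidiagonalTuple k p.2)
    (fun p t => g (Fin.cons p.1 t))]
  symm
  apply Finset.sum_nbij' (i := fun pt => Fin.cons pt.1.1 pt.2)
    (j := fun t => ⟨(t 0, ∑ i : Fin k, t i.succ), Fin.tail t⟩)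
  · rintro ⟨⟨p1, p2⟩, t⟩ hpt
    rw [Finset.mem_sigma, Finset.HasAntidiagonal.mem_antidiagonal, Finset.Nat.mem_antidiagonalTuple] at hpt
    rw [Finset.Nat.mem_antidiagonalTuple, Fin.sum_cons]
    simp only at hpt
    rw [hpt.2, hpt.1]
  · intro t ht
    rw [Finset.Nat.mem_antidiagonalTuple] at ht
    rw [Finset.mem_sigma, Finset.HasAntidiagonal.mem_antidiagonal, Finset.Nat.mem_antidiagonalTuple]
    exact ⟨by rw [← ht, Fin.sum_univ_succ], rfl⟩
  · rintro ⟨⟨p1, p2⟩, t⟩ hpt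
    rw [Finset.mem_sigma, Finset.HasAntidiagonal.mem_antidiagonal, Finset.Nat.mem_antidiagonalTuple] at hpt
    simp only at hpt
    have h0 : (Fin.cons (α := fun _ => ℕ) p1 t) 0 = p1 := rfl
    have hs : (∑ i : Fin k, (Fin.cons (α := fun _ => ℕ) p1 t) i.succ) = p2 := by
      simp only [Fin.cons_succ]
      exact hpt.2
    show (⟨((Fin.cons (α := fun _ => ℕ) p1 t) 0,
          ∑ i : Fin k, (Fin.cons (α := fun _ => ℕ) p1 t) i.succ),
        Fin.tail (Fin.cons (α := fun _ => ℕ) p1 t)⟩ : Σ _ : ℕ × ℕ, Fin k → ℕ)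
      = ⟨(p1, p2), t⟩
    rw [h0, hs, Fin.tail_cons]
  · intro t ht
    exact Fin.cons_self_tail t
  · rintro ⟨⟨p1, p2⟩, t⟩ hpt
    rfl

theorem card_CL_formula (r : ℕ) (hr : 1 ≤ r) :
    ∀ (k n : ℕ), r * k ≤ n →
      Fintype.card (CL n r k) =
        ∑ t ∈ Finset.Nat.antidiagonalTuple (k + 1) (n - r * k),
          ∏ i, Fintype.card (CL (t i) r 0) := by
  intro k
  induction k with
  | zero =>
    intro n _
    rw [Nat.mul_zero, Nat.sub_zero, Finset.Nat.antidiagonalTuple_one, Finset.sum_singleton]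
    simp
  | succ k IH =>
    intro n hkn
    have hrn : r ≤ n := le_trans (Nat.le_mul_of_pos_right r (Nat.succ_pos k)) hkn
    have hmul : r * (k + 1) = r * k + r := by ring
    rw [card_rec r hr n k hrn]
    conv_rhs => rw [sum_adT_succ (k + 1) (n - r * (k + 1))
      (fun t => ∏ i, Fintype.card (CL (t i) r 0))]
    have hprod : ∀ (p1 : ℕ) (t : Fin (k + 1) → ℕ),
        (∏ i : Fin (k + 2), Fintype.card (CL (Fin.cons (α := fun _ => ℕ) p1 t i) r 0))
          = Fintype.card (CL p1 r 0) * ∏ i : Fin (k + 1), Fintype.card (CL (t i) r 0) := by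
      intro p1 t
      rw [Fin.prod_univ_succ]
      simp [Fin.cons_zero, Fin.cons_succ]
    have hzero : ∀ p ∈ Finset.HasAntidiagonal.antidiagonal (n - r),
        Fintype.card (CL p.1 r 0) * Fintype.card (CL p.2 r k) ≠ 0 → r * k ≤ p.2 := by
      intro p _ h
      by_contra hc
      exact h (by rw [card_CL_eq_zero (n := p.2) (r := r) (k := k) (by omega)]; simp)
    rw [← Finset.sum_filter_of_ne hzero]
    apply Finset.sum_nbij' (i := fun p => (p.1, p.2 - r * k))
      (j := fun q => (q.1, q.2 + r * k))
    · rintro ⟨p1, p2⟩ hp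
      rw [Finset.mem_filter, Finset.HasAntidiagonal.mem_antidiagonal] at hp
      rw [Finset.HasAntidiagonal.mem_antidiagonal]
      simp only at hp ⊢
      omega
    · rintro ⟨q1, q2⟩ hq
      rw [Finset.HasAntidiagonal.mem_antidiagonal] at hq
      rw [Finset.mem_filter, Finset.HasAntidiagonal.mem_antidiagonal]
      simp only at hq ⊢
      omega
    · rintro ⟨p1, p2⟩ hp
      rw [Finset.mem_filter] at hp
      have : r * k ≤ p2 := hp.2
      simp only [Prod.mk.injEq]
      exact ⟨by simp, by omega⟩
    · rintro ⟨q1, q2⟩ _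
      simp only [Prod.mk.injEq]
      exact ⟨by simp, by omega⟩
    · rintro ⟨p1, p2⟩ hp
      rw [Finset.mem_filter, Finset.HasAntidiagonal.mem_antidiagonal] at hp
      simp only
      rw [IH p2 hp.2, Finset.mul_sum]
      apply Finset.sum_congr rfl
      intro t _
      rw [hprod]

end NConv

/-- if `n ≥ r k` then `N(n,r,k)` is the sum over all `(k+1)`-tuples
of nonnegative integers summing to `n - r k` of the products `∏ N(nᵢ,r,0)`;
if `n < r k` then `N(n,r,k) = 0`. -/
theorem N_convolution (n r k : ℕ) (hr : 1 ≤ r) :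
    (r * k ≤ n → N n r k =
      ∑ t ∈ Finset.Nat.antidiagonalTuple (k + 1) (n - r * k), ∏ i, N (t i) r 0) ∧
    (n < r * k → N n r k = 0) := by
  constructor
  · intro h
    simp only [NConv.N_eq]
    exact NConv.card_CL_formula r hr k n h
  · intro h
    rw [NConv.N_eq]
    exact NConv.card_CL_eq_zero h
end

section
/- For all integers n ≥ 0, r ≥ 1, k ≥ 0, M(n,r,k) = N(n,r+1,k); that is, the number of binary words of length n beginning with 0 that contain exactly k maximal runs of 1s of length r equals the number of binary words of length n beginning with 0 that contain exactly k maximal runs (of either symbol) of length r + 1. -/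
namespace RunsAux

open Polynomial

theorem loop_eq_append {r : Bool → Bool → Bool} {l : List Bool} {a : Bool} {g : List Bool}
    (gs : List (List Bool)) :
    List.splitBy.loop r l a g gs = gs.reverse ++ List.splitBy.loop r l a g [] := by
  induction l generalizing a g gs with
  | nil => simp [List.splitBy.loop]
  | cons b l IH =>
    simp_rw [List.splitBy.loop]
    split <;> rw [IH]
    conv_rhs => rw [IH]
    simp

theorem loop_repl (b : Bool) (m : ℕ) (v : List Bool) (g : List Bool)
    (hv : v.head? ≠ some b) :
    List.splitBy.loop (· == ·) (List.replicate m b ++ v) b g [] =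
      (g.reverse ++ List.replicate (m+1) b) :: runs v := by
  induction m generalizing g with
  | zero =>
    simp only [List.replicate, List.nil_append]
    cases v with
    | nil => simp [List.splitBy.loop, runs]
    | cons c vs =>
      have hc : (b == c) = false := by
        simp only [List.head?] at hv
        cases b <;> cases c <;> simp_all
      rw [List.splitBy.loop]
      simp only [hc]
      rw [loop_eq_append]
      simp [runs, List.splitBy, List.replicate]
  | succ m IH =>
    rw [List.replicate_succ, List.cons_append, List.splitBy.loop]
    simp only [beq_self_eq_true]
    rw [IH]
    simp [List.replicate_succ, List.replicate_succ']

theorem runs_replicate_append (b : Bool) (a : ℕ) (ha : 1 ≤ a) (v : List Bool)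
    (hv : v.head? ≠ some b) :
    runs (List.replicate a b ++ v) = List.replicate a b :: runs v := by
  obtain ⟨m, rfl⟩ : ∃ m, a = m + 1 := ⟨a - 1, (Nat.succ_pred_eq_of_pos ha).symm⟩
  rw [List.replicate_succ, List.cons_append]
  show List.splitBy.loop _ _ _ _ _ = _
  rw [loop_repl b m v [] hv]
  simp [List.replicate_succ]

def words : ℕ → Finset (List Bool)
  | 0 => {([] : List Bool)}
  | n+1 => ((words n).image (List.cons false)) ∪ ((words n).image (List.cons true))

theorem mem_words : ∀ (n : ℕ) (l : List Bool), l ∈ words n ↔ l.length = n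
  | 0, l => by cases l <;> simp [words]
  | n+1, l => by
    cases l with
    | nil => simp [words]
    | cons c t =>
      have := mem_words n t
      cases c <;> simp [words, this] <;> omega

theorem takeWhile_repl (b : Bool) (a : ℕ) (v : List Bool) (hv : v.head? ≠ some b) :
    (List.replicate a b ++ v).takeWhile (· == b) = List.replicate a b ∧
    (List.replicate a b ++ v).dropWhile (· == b) = v := by
  induction a with
  | zero =>
    cases v with
    | nil => simp
    | cons c vs =>
      have : (c == b) = false := by cases b <;> cases c <;> simp_all
      simp [List.takeWhile_cons, List.dropWhile_cons, this]
  | succ a IH =>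
    simp only [List.replicate_succ, List.cons_append, List.takeWhile_cons,
      List.dropWhile_cons, beq_self_eq_true, if_true]
    simpa using IH

def cnt (b : Bool) (f : List Bool → ℕ) (n k : ℕ) : ℕ :=
  ((words n).filter (fun l => l.head? ≠ some (!b) ∧ f l = k)).card

theorem cnt_zero (b : Bool) (f : List Bool → ℕ) (hf : f [] = 0) (k : ℕ) :
    cnt b f 0 k = if k = 0 then 1 else 0 := by
  unfold cnt words
  rcases eq_or_ne k 0 with rfl | hk
  · simp [Finset.filter_singleton, hf]
  · simp [Finset.filter_singleton, hf, Ne.symm hk, hk]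

theorem cnt_rec (b : Bool) (f : List Bool → ℕ) (g : ℕ → ℕ)
    (hf : ∀ a v, 1 ≤ a → v.head? ≠ some b → f (List.replicate a b ++ v) = g a + f v)
    (n k : ℕ) (hn : 1 ≤ n) :
    cnt b f n k = ∑ a ∈ Finset.Icc 1 n,
      (if g a ≤ k then cnt (!b) f (n-a) (k - g a) else 0) := by
  classical
  have key : ((words n).filter (fun l => l.head? ≠ some (!b) ∧ f l = k)) =
      (Finset.Icc 1 n).biUnion (fun a =>
        ((words (n-a)).filter (fun v => v.head? ≠ some b ∧ g a + f v = k)).image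
          (fun v => List.replicate a b ++ v)) := by
    ext l
    simp only [Finset.mem_filter, Finset.mem_biUnion, Finset.mem_Icc, Finset.mem_image,
      mem_words]
    constructor
    · rintro ⟨hlen, hhead, hfl⟩
      have hne : l ≠ [] := by rintro rfl; simp at hlen; omega
      have hhd : l.head? = some b := by
        cases l with
        | nil => simp at hne
        | cons c t =>
          cases b <;> cases c <;> simp_all
      set a := (l.takeWhile (· == b)).length with ha
      set v := l.dropWhile (· == b) with hv2
      have hvh : v.head? ≠ some b := by
        have := List.head?_dropWhile_not (· == b) l
        intro hcon
        rw [← hv2] at this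
        rw [hcon] at this
        simp at this
      have htw : l.takeWhile (· == b) = List.replicate a b := by
        rw [ha]
        apply List.eq_replicate_length.2
        intro x hx
        simpa using List.mem_takeWhile_imp hx
      have hsplit : List.replicate a b ++ v = l := by
        rw [← htw, hv2]; exact List.takeWhile_append_dropWhile
      have ha1 : 1 ≤ a := by
        cases l with
        | nil => simp at hne
        | cons c t =>
          have : c = b := by simpa using hhd
          subst this
          simp [ha, List.takeWhile_cons]
      have hvlen : v.length = n - a := by
        have := congrArg List.length hsplit
        simp at this
        omega
      have han : a ≤ n := by
        have := congrArg List.length hsplit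
        simp at this
        omega
      exact ⟨a, ⟨ha1, han⟩, v, ⟨hvlen, hvh, by rw [← hfl, ← hsplit, hf a v ha1 hvh]⟩, hsplit⟩
    · rintro ⟨a, ⟨ha1, han⟩, v, ⟨hvlen, hvh, hfv⟩, rfl⟩
      refine ⟨by simp [hvlen]; omega, ?_, by rw [hf a v ha1 hvh, hfv]⟩
      obtain ⟨m, rfl⟩ : ∃ m, a = m + 1 := ⟨a - 1, by omega⟩
      simp [List.replicate_succ]
  rw [cnt, key, Finset.card_biUnion]
  · apply Finset.sum_congr rfl
    intro a _
    rw [Finset.card_image_of_injective _ (fun v v' h => List.append_cancel_left h)]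
    rcases le_or_gt (g a) k with hga | hga
    · rw [if_pos hga, cnt]
      congr 1
      apply Finset.filter_congr
      intro v _
      simp only [Bool.not_not]
      constructor
      · rintro ⟨h1, h2⟩; exact ⟨h1, by omega⟩
      · rintro ⟨h1, h2⟩; exact ⟨h1, by omega⟩
    · rw [if_neg (by omega)]
      rw [Finset.card_eq_zero, Finset.filter_eq_empty_iff]
      rintro v _ ⟨h1, h2⟩
      omega
  · intro a ha a' ha' hne
    simp only [Finset.disjoint_left, Finset.mem_image, Finset.mem_filter, mem_words]
    rintro l ⟨v, ⟨hv1, hv2, hv3⟩, rfl⟩ ⟨v', ⟨hw1, hw2, hw3⟩, heq⟩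
    simp only [Finset.mem_coe, Finset.mem_Icc] at ha ha'
    apply hne
    have h1 := takeWhile_repl b a v hv2
    have h2 := takeWhile_repl b a' v' hw2
    have := congrArg (fun l => (List.takeWhile (· == b) l).length) heq.symm
    simp only [h1.1, h2.1, List.length_replicate] at this
    exact this

-- assume available from t1:

theorem runCount_nil (R : ℕ) : runCount [] R = 0 := rfl
theorem oneRunCount_nil (R : ℕ) : oneRunCount [] R = 0 := rfl

theorem runCount_decomp (R : ℕ) (b : Bool) (a : ℕ) (v : List Bool) (ha : 1 ≤ a)
    (hv : v.head? ≠ some b) :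
    runCount (List.replicate a b ++ v) R = (if a = R then 1 else 0) + runCount v R := by
  unfold runCount
  rw [runs_replicate_append b a ha v hv, List.filter_cons]
  by_cases h : a = R
  · simp [h]; omega
  · simp [h]

theorem head?_replicate_pos (b : Bool) (a : ℕ) (ha : 1 ≤ a) :
    (List.replicate a b).head? = some b := by
  obtain ⟨m, rfl⟩ : ∃ m, a = m + 1 := ⟨a - 1, by omega⟩
  rw [List.replicate_succ]
  rfl

theorem oneRunCount_decomp_false (R : ℕ) (a : ℕ) (v : List Bool) (ha : 1 ≤ a)
    (hv : v.head? ≠ some false) :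
    oneRunCount (List.replicate a false ++ v) R = 0 + oneRunCount v R := by
  unfold oneRunCount
  rw [runs_replicate_append false a ha v hv, List.filter_cons]
  have : (List.replicate a false).head? = some false := head?_replicate_pos false a ha
  simp [this]

theorem oneRunCount_decomp_true (R : ℕ) (a : ℕ) (v : List Bool) (ha : 1 ≤ a)
    (hv : v.head? ≠ some true) :
    oneRunCount (List.replicate a true ++ v) R = (if a = R then 1 else 0) + oneRunCount v R := by
  unfold oneRunCount
  rw [runs_replicate_append true a ha v hv, List.filter_cons]
  have h1 : (List.replicate a true).head? = some true := head?_replicate_pos true a ha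
  by_cases h : a = R
  · have h1' : (List.replicate R true).head? = some true := by rw [← h]; exact h1
    simp [h, h1']
    omega
  · simp [h, h1]

theorem exists_decomp (l : List Bool) (hne : l ≠ []) :
    ∃ b a v, 1 ≤ a ∧ v.head? ≠ some b ∧ l = List.replicate a b ++ v ∧ v.length < l.length := by
  obtain ⟨c, t, rfl⟩ : ∃ c t, l = c :: t := by
    cases l with
    | nil => exact absurd rfl hne
    | cons c t => exact ⟨c, t, rfl⟩
  set a := ((c :: t).takeWhile (· == c)).length with ha
  set v := (c :: t).dropWhile (· == c) with hv2
  have hvh : v.head? ≠ some c := by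
    have := List.head?_dropWhile_not (· == c) (c :: t)
    intro hcon
    rw [← hv2, hcon] at this
    simp at this
  have htw : (c :: t).takeWhile (· == c) = List.replicate a c := by
    rw [ha]
    apply List.eq_replicate_length.2
    intro x hx
    simpa using List.mem_takeWhile_imp hx
  have hsplit : List.replicate a c ++ v = c :: t := by
    rw [← htw, hv2]; exact List.takeWhile_append_dropWhile
  have ha1 : 1 ≤ a := by
    rw [ha]
    simp [List.takeWhile_cons]
  have hlen := congrArg List.length hsplit
  simp only [List.length_append, List.length_replicate, List.length_cons] at hlen
  exact ⟨c, a, v, ha1, hvh, hsplit.symm, by simp only [List.length_cons]; omega⟩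

theorem length_runs_le_aux : ∀ (n : ℕ) (l : List Bool), l.length = n → (runs l).length ≤ l.length := by
  intro n
  induction n using Nat.strong_induction_on with
  | _ n IH =>
    intro l hn
    subst hn
    rcases eq_or_ne l [] with rfl | hne
    · simp [runs]
    · obtain ⟨b, a, v, ha, hvh, rfl, hlt⟩ := exists_decomp l hne
      rw [runs_replicate_append b a ha v hvh]
      have := IH v.length hlt v rfl
      simp only [List.length_cons, List.length_append, List.length_replicate]
      omega

theorem length_runs_le (l : List Bool) : (runs l).length ≤ l.length :=
  length_runs_le_aux l.length l rfl

theorem runCount_le (l : List Bool) (R : ℕ) : runCount l R ≤ l.length :=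
  le_trans (List.length_filter_le _ _) (length_runs_le l)

theorem oneRunCount_le (l : List Bool) (R : ℕ) : oneRunCount l R ≤ l.length :=
  le_trans (List.length_filter_le _ _) (length_runs_le l)

variable {R : Type} [CommRing R]

def dlt (n : ℕ) : R → R → R := fun one zero => if n = 0 then one else zero

-- reindexing
theorem sum_Icc_sub (m : ℕ) (h : ℕ → R) :
    ∑ a ∈ Finset.Icc 1 m, h (m - a) = ∑ j ∈ Finset.range m, h j := by
  apply Finset.sum_bij' (fun a _ => m - a) (fun j _ => m - j)
  · intro a ha
    simp only [Finset.mem_Icc] at ha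
    simp only [Finset.mem_range]
    omega
  · intro j hj
    simp only [Finset.mem_range] at hj
    simp only [Finset.mem_Icc]
    omega
  · intro a ha
    simp only [Finset.mem_Icc] at ha
    omega
  · intro j hj
    simp only [Finset.mem_range] at hj
    omega
  · intro a ha
    rfl

theorem key_identity (r : ℕ) (hr : 1 ≤ r) (y : R) (G : ℕ → R)
    (hG : ∀ n, G n = (if n = 0 then 1 else 0) +
      ∑ a ∈ Finset.Icc 1 n, y ^ (if a = r + 1 then 1 else 0) * G (n - a)) (n : ℕ) :
    G n = (if n = 0 then 1 else 0) +
      ∑ a ∈ Finset.Icc 1 n, ((if n - a = 0 then 1 else 0) +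
        ∑ b ∈ Finset.Icc 1 (n - a), y ^ (if b = r then 1 else 0) * G (n - a - b)) := by
  -- T m = sum of G over range m
  set T : ℕ → R := fun m => ∑ j ∈ Finset.range m, G j with hT
  -- split powers: ∑_{b ∈ Icc 1 m} y^{[b=r']} * G (m-b) = T m + [r'≤m](y-1) G(m-r')
  have split : ∀ (r' : ℕ), 1 ≤ r' → ∀ m, (∑ b ∈ Finset.Icc 1 m, y ^ (if b = r' then 1 else 0) * G (m - b)) =
      T m + (if r' ≤ m then (y - 1) * G (m - r') else 0) := by
    intro r' hr' m
    have : ∀ b ∈ Finset.Icc 1 m, y ^ (if b = r' then 1 else 0) * G (m - b) =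
        G (m - b) + (if b = r' then (y - 1) * G (m - b) else 0) := by
      intro b _
      split <;> simp <;> ring
    rw [Finset.sum_congr rfl this, Finset.sum_add_distrib]
    congr 1
    · rw [hT]; exact sum_Icc_sub m G
    · rw [Finset.sum_ite_eq' (Finset.Icc 1 m) r' (fun b => (y-1) * G (m - b))]
      simp only [Finset.mem_Icc]
      by_cases h : r' ≤ m
      · rw [if_pos ⟨hr', h⟩, if_pos h]
      · rw [if_neg (by omega), if_neg h]
  -- hG in split form
  have hG' : ∀ m, G m = (if m = 0 then 1 else 0) + T m
      + (if r + 1 ≤ m then (y - 1) * G (m - (r+1)) else 0) := by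
    intro m
    rw [hG m, split (r+1) (by omega) m]
    ring
  -- shifted-sum lemma: ∑_{a ∈ Icc 1 n} (if c ≤ n - a then h (n - a - c) else 0) = ∑_{j ∈ range (n - c)} h j
  have shift : ∀ (c : ℕ) (h : ℕ → R), 1 ≤ c →
      (∑ a ∈ Finset.Icc 1 n, (if c ≤ n - a then h (n - a - c) else 0)) =
        ∑ j ∈ Finset.range (n - c), h j := by
    intro c h hc
    rw [sum_Icc_sub n (fun m => if c ≤ m then h (m - c) else 0)]
    rcases le_or_gt c n with hcn | hcn
    · have h1 : ∑ m ∈ Finset.Ico 0 c, (if c ≤ m then h (m - c) else 0) = 0 := by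
        apply Finset.sum_eq_zero
        intro m hm
        simp only [Finset.mem_Ico] at hm
        rw [if_neg (by omega)]
      conv_lhs => rw [Finset.range_eq_Ico, ← Finset.sum_Ico_consecutive _ (Nat.zero_le c) hcn]
      rw [h1, zero_add, Finset.sum_Ico_eq_sum_range]
      apply Finset.sum_congr rfl
      intro i _
      rw [if_pos (by omega)]
      congr 1
      omega
    · have h1 : ∀ m ∈ Finset.range n, (if c ≤ m then h (m - c) else 0) = 0 := by
        intro m hm
        simp only [Finset.mem_range] at hm
        rw [if_neg (by omega)]
      rw [Finset.sum_eq_zero h1, Nat.sub_eq_zero_of_le (le_of_lt hcn), Finset.range_zero,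
        Finset.sum_empty]
  -- now the main computation
  -- LHS target transform
  have inner : ∀ a ∈ Finset.Icc 1 n, ((if n - a = 0 then 1 else 0) +
        ∑ b ∈ Finset.Icc 1 (n - a), y ^ (if b = r then 1 else 0) * G (n - a - b)) =
      (if n - a = 0 then (1:R) else 0) + T (n - a) + (if r ≤ n - a then (y - 1) * G (n - a - r) else 0) := by
    intro a _
    rw [split r hr (n - a)]
    ring
  rw [Finset.sum_congr rfl inner]
  have expand : ∀ a ∈ Finset.Icc 1 n, ((if n - a = 0 then (1:R) else 0) + T (n - a)
        + (if r ≤ n - a then (y - 1) * G (n - a - r) else 0)) =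
      G (n - a) - (if r + 1 ≤ n - a then (y-1) * G (n - a - (r+1)) else 0)
        + (if r ≤ n - a then (y - 1) * G (n - a - r) else 0) := by
    intro a _
    have := hG' (n - a)
    -- G (n-a) = δ + T (n-a) + if ...
    rw [this]
    ring
  rw [Finset.sum_congr rfl expand]
  simp only [Finset.sum_add_distrib, Finset.sum_sub_distrib]
  -- now: goal G n = δ n + (∑ G(n-a) - ∑ [r+1≤..](y-1)G(n-a-(r+1)) + ∑ [r≤..](y-1)G(n-a-r))
  have e1 : ∑ a ∈ Finset.Icc 1 n, G (n - a) = T n := sum_Icc_sub n G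
  have e2 : ∑ a ∈ Finset.Icc 1 n, (if r + 1 ≤ n - a then (y-1) * G (n - a - (r+1)) else 0) =
      ∑ j ∈ Finset.range (n - (r+1)), (y-1) * G j := shift (r+1) (fun j => (y-1) * G j) (by omega)
  have e3 : ∑ a ∈ Finset.Icc 1 n, (if r ≤ n - a then (y-1) * G (n - a - r) else 0) =
      ∑ j ∈ Finset.range (n - r), (y-1) * G j := shift r (fun j => (y-1) * G j) hr
  rw [e1, e2, e3, hG' n]
  have e4 : ∑ j ∈ Finset.range (n - r), (y-1) * G j =
      ∑ j ∈ Finset.range (n - (r+1)), (y-1) * G j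
        + (if r + 1 ≤ n then (y - 1) * G (n - (r+1)) else 0) := by
    rcases le_or_gt (r+1) n with hrn | hrn
    · have : n - r = (n - (r+1)) + 1 := by omega
      rw [this, Finset.sum_range_succ, if_pos hrn]
    · have : n - r = n - (r+1) := by omega
      rw [this, if_neg (by omega), add_zero]
  rw [e4]
  ring

open Polynomial


theorem card_ofFn (P : List Bool → Prop) [DecidablePred P] (n : ℕ) :
    Fintype.card {w : Fin n → Bool // P (List.ofFn w)} = ((words n).filter P).card := by
  classical
  rw [Fintype.card_subtype]
  apply Finset.card_bij (fun (w : Fin n → Bool) _ => List.ofFn w)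
  · intro w hw
    simp only [Finset.mem_filter, Finset.mem_univ, true_and] at hw
    simp [Finset.mem_filter, mem_words, hw]
  · intro w _ w' _ h
    exact List.ofFn_injective h
  · intro l hl
    simp only [Finset.mem_filter, mem_words] at hl
    obtain ⟨hlen, hP⟩ := hl
    subst hlen
    exact ⟨l.get, by simpa using hP, List.ofFn_get l⟩

theorem cnt_vanish (b : Bool) (f : List Bool → ℕ) (hb : ∀ l, f l ≤ l.length)
    (n k : ℕ) (h : n < k) : cnt b f n k = 0 := by
  rw [cnt, Finset.card_eq_zero, Finset.filter_eq_empty_iff]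
  rintro l hl ⟨h1, h2⟩
  rw [mem_words] at hl
  have := hb l
  omega

noncomputable def gcnt (b : Bool) (f : List Bool → ℕ) (n : ℕ) : Polynomial ℤ :=
  ∑ k ∈ Finset.range (n+1), C (cnt b f n k : ℤ) * X ^ k

theorem gcnt_pad (b : Bool) (f : List Bool → ℕ) (hb : ∀ l, f l ≤ l.length) (n m : ℕ)
    (hm : n + 1 ≤ m) :
    gcnt b f n = ∑ k ∈ Finset.range m, C (cnt b f n k : ℤ) * X ^ k := by
  rw [gcnt]
  apply Finset.sum_subset
  · exact Finset.range_subset_range.2 hm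
  · intro k _ hk
    simp only [Finset.mem_range, not_lt] at hk
    rw [cnt_vanish b f hb n k (by omega)]
    simp

theorem gcnt_zero (b : Bool) (f : List Bool → ℕ) (hf : f [] = 0) : gcnt b f 0 = 1 := by
  rw [gcnt]
  simp [cnt_zero b f hf]

theorem gcnt_rec (b : Bool) (f : List Bool → ℕ) (g : ℕ → ℕ)
    (hf : ∀ a v, 1 ≤ a → v.head? ≠ some b → f (List.replicate a b ++ v) = g a + f v)
    (hb : ∀ l, f l ≤ l.length) (hg : ∀ a, g a ≤ 1) (n : ℕ) (hn : 1 ≤ n) :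
    gcnt b f n = ∑ a ∈ Finset.Icc 1 n, X ^ (g a) * gcnt (!b) f (n - a) := by
  rw [gcnt]
  have : ∀ k ∈ Finset.range (n+1), C (cnt b f n k : ℤ) * X ^ k =
      ∑ a ∈ Finset.Icc 1 n,
        (if g a ≤ k then C (cnt (!b) f (n-a) (k - g a) : ℤ) else 0) * X ^ k := by
    intro k _
    rw [cnt_rec b f g hf n k hn]
    push_cast
    rw [map_sum, Finset.sum_mul]
    apply Finset.sum_congr rfl
    intro a _
    split <;> simp
  rw [Finset.sum_congr rfl this, Finset.sum_comm]
  apply Finset.sum_congr rfl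
  intro a ha
  simp only [Finset.mem_Icc] at ha
  rcases Nat.le_one_iff_eq_zero_or_eq_one.mp (hg a) with h0 | h1
  · rw [h0, pow_zero, one_mul,
      gcnt_pad (!b) f hb (n - a) (n+1) (by omega)]
    apply Finset.sum_congr rfl
    intro k _
    rw [if_pos (by omega)]
    norm_num
  · rw [h1, pow_one]
    rw [Finset.sum_range_succ']
    have hz : (if 1 ≤ 0 then C (cnt (!b) f (n-a) (0 - 1) : ℤ) else 0) * X ^ 0 = 0 := by
      rw [if_neg (by omega)]
      simp
    rw [hz, add_zero]
    rw [gcnt_pad (!b) f hb (n - a) n (by omega), Finset.mul_sum]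
    apply Finset.sum_congr rfl
    intro k _
    rw [if_pos (by omega)]
    have : k + 1 - 1 = k := by omega
    rw [this]
    ring

theorem gcnt_coeff (b : Bool) (f : List Bool → ℕ) (n k : ℕ) (hk : k ≤ n) :
    (gcnt b f n).coeff k = (cnt b f n k : ℤ) := by
  rw [gcnt, Polynomial.finset_sum_coeff]
  have : ∀ j ∈ Finset.range (n+1), (C (cnt b f n j : ℤ) * X ^ j).coeff k =
      if j = k then (cnt b f n j : ℤ) else 0 := by
    intro j _
    rw [Polynomial.coeff_C_mul, Polynomial.coeff_X_pow]
    split <;> simp_all [eq_comm]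
  rw [Finset.sum_congr rfl this, Finset.sum_ite_eq' (Finset.range (n+1)) k
    (fun j => (cnt b f n j : ℤ)), if_pos (by simp; omega)]

end RunsAux

namespace RunsAux

open Polynomial

section Main

variable (r : ℕ)

noncomputable def Gp (r n : ℕ) : Polynomial ℤ := gcnt false (fun l => runCount l (r+1)) n

theorem Gp_def (r n : ℕ) : Gp r n = gcnt false (fun l => runCount l (r+1)) n := rfl

theorem G01 (r : ℕ) : ∀ n : ℕ, gcnt true (fun l => runCount l (r+1)) n = Gp r n := by
  intro n
  induction n using Nat.strong_induction_on with
  | _ n IH =>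
    rcases Nat.eq_zero_or_pos n with rfl | hn
    · rw [Gp_def, gcnt_zero true (fun l => runCount l (r+1)) rfl,
        gcnt_zero false (fun l => runCount l (r+1)) rfl]
    · rw [Gp_def, gcnt_rec true _ (fun a => if a = r+1 then 1 else 0)
        (fun a v ha hv => runCount_decomp (r+1) true a v ha hv)
        (fun l => runCount_le l (r+1)) (fun a => by split <;> omega) n hn,
        gcnt_rec false _ (fun a => if a = r+1 then 1 else 0)
        (fun a v ha hv => runCount_decomp (r+1) false a v ha hv)
        (fun l => runCount_le l (r+1)) (fun a => by split <;> omega) n hn]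
      apply Finset.sum_congr rfl
      intro a ha
      simp only [Finset.mem_Icc] at ha
      congr 1
      rcases Nat.eq_zero_or_pos (n - a) with h0 | hpos
      · rw [h0, Bool.not_true, Bool.not_false,
          gcnt_zero false (fun l => runCount l (r+1)) rfl,
          gcnt_zero true (fun l => runCount l (r+1)) rfl]
      · rw [Bool.not_true, Bool.not_false]
        exact ((IH (n - a) (by omega)).trans (Gp_def r (n-a))).symm

theorem hG (r : ℕ) : ∀ n : ℕ, Gp r n = (if n = 0 then 1 else 0) +
    ∑ a ∈ Finset.Icc 1 n, X ^ (if a = r + 1 then 1 else 0) * Gp r (n - a) := by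
  intro n
  rcases Nat.eq_zero_or_pos n with rfl | hn
  · rw [if_pos rfl]
    simp [Gp_def, gcnt_zero false (fun l => runCount l (r+1)) rfl]
  · rw [if_neg (by omega), zero_add, Gp_def,
      gcnt_rec false _ (fun a => if a = r+1 then 1 else 0)
        (fun a v ha hv => runCount_decomp (r+1) false a v ha hv)
        (fun l => runCount_le l (r+1)) (fun a => by split <;> omega) n hn]
    apply Finset.sum_congr rfl
    intro a _
    rw [Bool.not_false, G01]

theorem P_eq_G (r : ℕ) (hr : 1 ≤ r) :
    ∀ n : ℕ, gcnt false (fun l => oneRunCount l r) n = Gp r n := by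
  intro n
  induction n using Nat.strong_induction_on with
  | _ n IH =>
    rcases Nat.eq_zero_or_pos n with rfl | hn
    · rw [Gp_def, gcnt_zero false (fun l => oneRunCount l r) rfl,
        gcnt_zero false (fun l => runCount l (r+1)) rfl]
    · rw [gcnt_rec false _ (fun _ => 0)
        (fun a v ha hv => oneRunCount_decomp_false r a v ha hv)
        (fun l => oneRunCount_le l r) (fun a => Nat.zero_le _) n hn]
      have step : ∀ a ∈ Finset.Icc 1 n,
          X ^ (0:ℕ) * gcnt (!false) (fun l => oneRunCount l r) (n - a) =
          (if n - a = 0 then 1 else 0) +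
            ∑ b ∈ Finset.Icc 1 (n - a), X ^ (if b = r then 1 else 0) * Gp r (n - a - b) := by
        intro a ha
        simp only [Finset.mem_Icc] at ha
        rw [pow_zero, one_mul, Bool.not_false]
        rcases Nat.eq_zero_or_pos (n - a) with h0 | hpos
        · rw [h0, if_pos rfl, gcnt_zero _ (fun l => oneRunCount l r) rfl]
          simp
        · rw [if_neg (by omega), zero_add,
            gcnt_rec true _ (fun b => if b = r then 1 else 0)
              (fun b v hb hv => oneRunCount_decomp_true r b v hb hv)
              (fun l => oneRunCount_le l r) (fun b => by split <;> omega) (n - a) hpos]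
          apply Finset.sum_congr rfl
          intro b hb
          simp only [Finset.mem_Icc] at hb
          rw [Bool.not_true]
          congr 1
          exact IH (n - a - b) (by omega)
      rw [Finset.sum_congr rfl step]
      have := key_identity r hr (X : Polynomial ℤ) (Gp r) (hG r) n
      rw [if_neg (by omega), zero_add] at this
      exact this.symm

theorem cnt_eq (r : ℕ) (hr : 1 ≤ r) (n k : ℕ) :
    cnt false (fun l => oneRunCount l r) n k = cnt false (fun l => runCount l (r+1)) n k := by
  rcases le_or_gt k n with hk | hk
  · have h1 := gcnt_coeff false (fun l => oneRunCount l r) n k hk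
    have h2 := gcnt_coeff false (fun l => runCount l (r+1)) n k hk
    have h3 := P_eq_G r hr n
    rw [Gp_def] at h3
    rw [h3] at h1
    rw [h1] at h2
    exact_mod_cast h2
  · rw [cnt_vanish false _ (fun l => oneRunCount_le l r) n k hk,
      cnt_vanish false _ (fun l => runCount_le l (r+1)) n k hk]

end Main

end RunsAux

/-- `M(n,r,k) = N(n,r+1,k)`. -/
theorem M_eq_N (n r k : ℕ) (hr : 1 ≤ r) : M n r k = N n (r + 1) k := by
  classical
  have hM : M n r k = RunsAux.cnt false (fun l => oneRunCount l r) n k := by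
    rw [M, RunsAux.card_ofFn (fun l => l.head? ≠ some true ∧ oneRunCount l r = k) n,
      RunsAux.cnt]
    congr 1
  have hN : N n (r+1) k = RunsAux.cnt false (fun l => runCount l (r+1)) n k := by
    rw [N, RunsAux.card_ofFn (fun l => l.head? ≠ some true ∧ runCount l (r+1) = k) n,
      RunsAux.cnt]
    congr 1
  rw [hM, hN, RunsAux.cnt_eq r hr n k]
end

section
/- For every integer n ≥ 0 there exists a bijection γ from the set of binary words of length n that begin with 0 to itself such that, for all integers r ≥ 1 and k ≥ 0 and every such word w, the word w contains exactly k maximal runs of length r + 1 if and only if γ(w) contains exactly k maximal runs of 1s of length r. (γ replaces the i-th maximal run of w by a block of the same length consisting of a 0 followed by 1s.) -/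
theorem splitBy_loop_eq_s10 {α : Type*} (R : α → α → Bool) :
    ∀ (t : List α) (c : α) (acc : List α) (gs : List (List α)),
      List.splitBy.loop R t c acc gs =
        gs.reverse ++ (List.splitBy.loop R t c [] []).modifyHead (acc.reverse ++ ·) := by
  intro t
  induction t with
  | nil => intro c acc gs; simp [List.splitBy.loop]
  | cons a as ih =>
    intro c acc gs
    simp only [List.splitBy.loop]
    cases h : R c a
    · simp only
      rw [ih a [] ((c::acc).reverse :: gs), ih a [] [[c].reverse]]
      cases h' : List.splitBy.loop R as a [] [] with
      | nil => simp
      | cons x xs => simp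
    · simp only
      rw [ih a (c :: acc) gs, ih a [c] []]
      cases h' : List.splitBy.loop R as a [] [] with
      | nil => simp
      | cons x xs => simp

theorem splitBy_cons_cons {α : Type*} (R : α → α → Bool) (a b : α) (t : List α) :
    List.splitBy R (a :: b :: t) =
      if R a b then (List.splitBy R (b :: t)).modifyHead (a :: ·)
      else [a] :: List.splitBy R (b :: t) := by
  show List.splitBy.loop R (b :: t) a [] [] = _
  simp only [List.splitBy.loop]
  cases h : R a b
  · simp only [Bool.false_eq_true, if_false]
    rw [splitBy_loop_eq_s10 R t b [] [[a].reverse]]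
    cases h' : List.splitBy.loop R t b [] [] with
    | nil => simp [List.splitBy, h']
    | cons x xs => simp [List.splitBy, h']
  · simp only [if_true]
    rw [splitBy_loop_eq_s10 R t b [a] []]
    cases h' : List.splitBy.loop R t b [] [] with
    | nil => simp [List.splitBy, h']
    | cons x xs => simp [List.splitBy, h']

theorem splitBy_singleton {α : Type*} (R : α → α → Bool) (a : α) :
    List.splitBy R [a] = [[a]] := rfl

theorem splitBy_shape {α : Type*} (R : α → α → Bool) :
    ∀ (t : List α) (a : α), ∃ ch cs, List.splitBy R (a :: t) = (a :: ch) :: cs := by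
  intro t
  induction t with
  | nil => intro a; exact ⟨[], [], rfl⟩
  | cons b t ih =>
    intro a
    rw [splitBy_cons_cons]
    obtain ⟨ch, cs, hch⟩ := ih b
    cases h : R a b
    · simp only [Bool.false_eq_true, if_false]
      exact ⟨[], List.splitBy R (b :: t), rfl⟩
    · simp only [if_true, hch]
      exact ⟨b :: ch, cs, rfl⟩

theorem splitBy_replicate_append {α : Type*} (R : α → α → Bool) (b : α) (hbb : R b b = true) :
    ∀ (k : ℕ) (t : List α), 0 < k → (∀ c, t.head? = some c → R b c = false) →
      List.splitBy R (List.replicate k b ++ t) = List.replicate k b :: List.splitBy R t := by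
  intro k
  induction k with
  | zero => omega
  | succ k ih =>
    intro t _ ht
    cases k with
    | zero =>
      cases t with
      | nil => simp [splitBy_singleton]
      | cons c t' =>
        have hc : R b c = false := ht c rfl
        simp only [List.replicate_succ, List.replicate_zero, List.nil_append,
          List.cons_append, List.nil_append] at *
        rw [splitBy_cons_cons, hc]
        simp
    | succ m =>
      have h1 : List.replicate (m + 1 + 1) b ++ t
          = b :: (b :: (List.replicate m b ++ t)) := by
        simp [List.replicate_succ]
      rw [h1, splitBy_cons_cons, hbb]
      have h2 : b :: (List.replicate m b ++ t) = List.replicate (m+1) b ++ t := by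
        simp [List.replicate_succ]
      rw [h2, ih t (by omega) ht]
      simp [List.replicate_succ]

def build : Bool → List ℕ → List Bool
  | _, [] => []
  | b, l :: ls => List.replicate l b ++ build (!b) ls

def bchunks : Bool → List ℕ → List (List Bool)
  | _, [] => []
  | b, l :: ls => List.replicate l b :: bchunks (!b) ls

def blocks : List ℕ → List Bool
  | [] => []
  | l :: ls => (false :: List.replicate (l - 1) true) ++ blocks ls

theorem build_length : ∀ (b : Bool) (ls : List ℕ), (build b ls).length = ls.sum := by
  intro b ls
  induction ls generalizing b with
  | nil => rfl
  | cons l ls ih => simp [build, ih]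

theorem blocks_length : ∀ (ls : List ℕ), (∀ l ∈ ls, 0 < l) → (blocks ls).length = ls.sum := by
  intro ls
  induction ls with
  | nil => simp [blocks]
  | cons l ls ih =>
    intro h
    have hl : 0 < l := h l (by simp)
    simp only [blocks, List.length_append, List.length_cons, List.length_replicate,
      List.sum_cons, ih (fun x hx => h x (by simp [hx]))]
    omega

theorem build_head_ne (ls : List ℕ) (h : ∀ l ∈ ls, 0 < l) :
    (build false ls).head? ≠ some true := by
  cases ls with
  | nil => simp [build]
  | cons l ls =>
    have hl : 0 < l := h l (by simp)
    cases l with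
    | zero => omega
    | succ m => simp [build, List.replicate_succ]

theorem blocks_head_ne (ls : List ℕ) : (blocks ls).head? ≠ some true := by
  cases ls with
  | nil => simp [blocks]
  | cons l ls => simp [blocks]

theorem build_head (b : Bool) (l : ℕ) (ls : List ℕ) (hl : 0 < l) :
    (build b (l :: ls)).head? = some b := by
  cases l with
  | zero => omega
  | succ m => simp [build, List.replicate_succ]

theorem runs_build : ∀ (ls : List ℕ) (b : Bool), (∀ l ∈ ls, 0 < l) →
    runs (build b ls) = bchunks b ls := by
  intro ls
  induction ls with
  | nil => intro b _; rfl
  | cons l ls ih =>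
    intro b h
    have hl : 0 < l := h l (by simp)
    have hpos : ∀ x ∈ ls, 0 < x := fun x hx => h x (by simp [hx])
    show List.splitBy (· == ·) (List.replicate l b ++ build (!b) ls) = _
    rw [splitBy_replicate_append (· == ·) b (by simp) l (build (!b) ls) hl ?_]
    · rw [show List.splitBy (· == ·) (build (!b) ls) = runs (build (!b) ls) from rfl,
        ih (!b) hpos]
      rfl
    · intro c hc
      cases ls with
      | nil => simp [build] at hc
      | cons l' ls' =>
        rw [build_head (!b) l' ls' (hpos l' (by simp))] at hc
        cases b <;> cases c <;> simp_all

theorem map_length_bchunks : ∀ (b : Bool) (ls : List ℕ),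
    (bchunks b ls).map List.length = ls := by
  intro b ls
  induction ls generalizing b with
  | nil => rfl
  | cons l ls ih => simp [bchunks, ih]

theorem filter_bchunks_length (m : ℕ) :
    ∀ (ls : List ℕ) (b : Bool),
      ((bchunks b ls).filter (fun g => g.length = m)).length = ls.count m := by
  intro ls
  induction ls with
  | nil => intro b; rfl
  | cons l ls ih =>
    intro b
    simp only [bchunks, List.filter_cons, List.length_replicate, List.count_cons, ih (!b)]
    by_cases h : l = m
    · simp [h, ih (!b)]
    · simp [h, Ne.symm h, ih (!b)]

theorem runCount'_build (ls : List ℕ) (m : ℕ) (h : ∀ l ∈ ls, 0 < l) :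
    ((runs (build false ls)).filter (fun g => g.length = m)).length = ls.count m := by
  rw [runs_build ls false h, filter_bchunks_length]

theorem oneRun_filter_cons_false (w : List Bool) (r : ℕ) :
    ((runs (false :: w)).filter (fun g => g.length = r ∧ g.head? = some true)).length
      = ((runs w).filter (fun g => g.length = r ∧ g.head? = some true)).length := by
  cases w with
  | nil => simp [runs, splitBy_singleton]
  | cons c t =>
    show ((List.splitBy (· == ·) (false :: c :: t)).filter _).length = _
    rw [splitBy_cons_cons]
    cases c with
    | false =>
      simp only [show (false == false) = true from rfl, if_true]
      obtain ⟨ch, cs, hch⟩ := splitBy_shape (· == ·) t false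
      show ((List.modifyHead _ (List.splitBy (· == ·) (false :: t))).filter _).length
        = ((List.splitBy (· == ·) (false :: t)).filter _).length
      rw [hch]
      simp
    | true =>
      simp only [show (false == true) = false from rfl, Bool.false_eq_true, if_false]
      simp [runs]

theorem oneRunCount'_blocks : ∀ (ls : List ℕ), (∀ l ∈ ls, 0 < l) → ∀ r : ℕ, 1 ≤ r →
    ((runs (blocks ls)).filter (fun g => g.length = r ∧ g.head? = some true)).length
      = ls.count (r + 1) := by
  intro ls
  induction ls with
  | nil => intro _ r _; rfl
  | cons l ls ih =>
    intro h r hr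
    have hl : 0 < l := h l (by simp)
    have hpos : ∀ x ∈ ls, 0 < x := fun x hx => h x (by simp [hx])
    rcases Nat.lt_or_ge l 2 with h2 | h2
    · -- l = 1
      have hl1 : l = 1 := by omega
      subst hl1
      have hb : blocks (1 :: ls) = false :: blocks ls := by simp [blocks]
      rw [hb, oneRun_filter_cons_false, ih hpos r hr, List.count_cons]
      have : ¬ ((1 : ℕ) = r + 1) := by omega
      simp [this]
      omega
    · -- l ≥ 2
      obtain ⟨m, rfl⟩ : ∃ m, l = m + 2 := ⟨l - 2, by omega⟩
      have hb : blocks ((m + 2) :: ls)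
          = false :: true :: (List.replicate m true ++ blocks ls) := by
        simp [blocks, List.replicate_succ, show m + 2 - 1 = m + 1 by omega]
      rw [hb]
      show ((List.splitBy (· == ·) _).filter _).length = _
      rw [splitBy_cons_cons]
      simp only [show (false == true) = false from rfl, Bool.false_eq_true, if_false]
      have hrepl : (true : Bool) :: (List.replicate m true ++ blocks ls)
          = List.replicate (m + 1) true ++ blocks ls := by simp [List.replicate_succ]
      rw [hrepl, splitBy_replicate_append (· == ·) true (by simp) (m+1) (blocks ls)
        (by omega) ?_]
      · simp only [List.filter_cons, decide_eq_true_eq]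
        have h1 : ¬ (([false] : List Bool).length = r ∧ ([false] : List Bool).head? = some true) := by
          simp
        have hhead : (List.replicate (m+1) true).head? = some true := by
          simp [List.replicate_succ]
        have hlen : (List.replicate (m+1) true).length = m + 1 := List.length_replicate
        have heq : ((List.splitBy (· == ·) (blocks ls)).filter
            (fun g => decide (g.length = r ∧ g.head? = some true))).length = ls.count (r + 1) :=
          ih hpos r hr
        have hconv : ∀ X : List (List Bool),
            X.filter (fun g => decide (g.length = r) && decide (g.head? = some true))
              = X.filter (fun g => decide (g.length = r ∧ g.head? = some true)) := by
          intro X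
          apply List.filter_congr
          intro g _
          simp
        rw [List.count_cons]
        by_cases hm : m + 1 = r
        · subst hm
          simp [h1, hhead, hlen, hconv, heq]
        · simp [h1, hhead, hlen, hm, hconv, heq, show ¬(m + 2 = r + 1) by omega]
      · intro c hc
        have := blocks_head_ne ls
        cases c
        · simp
        · exact absurd hc this

/-- decomposition relation for blocks -/
def Rd : Bool → Bool → Bool := fun _ c => c

theorem splitBy_Rd_blocks : ∀ (ls : List ℕ), (∀ l ∈ ls, 0 < l) →
    (blocks ls).splitBy Rd = ls.map (fun l => false :: List.replicate (l - 1) true) := by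
  intro ls
  induction ls with
  | nil => intro _; rfl
  | cons l ls ih =>
    intro h
    have hl : 0 < l := h l (by simp)
    have hpos : ∀ x ∈ ls, 0 < x := fun x hx => h x (by simp [hx])
    rcases Nat.lt_or_ge l 2 with h2 | h2
    · have hl1 : l = 1 := by omega
      subst hl1
      have hb : blocks (1 :: ls) = false :: blocks ls := by simp [blocks]
      rw [hb]
      cases hbl : blocks ls with
      | nil =>
        have : ls = [] := by
          cases ls with
          | nil => rfl
          | cons a as =>
            exfalso
            have := blocks_length (a :: as) hpos
            rw [hbl] at this
            have ha : 0 < a := hpos a (by simp)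
            simp at this
            omega
        subst this
        simp [splitBy_singleton]
      | cons c t =>
        have hc : c = false := by
          have := blocks_head_ne ls
          rw [hbl] at this
          cases c
          · rfl
          · simp at this
        subst hc
        rw [splitBy_cons_cons]
        simp only [show Rd false false = false from rfl, Bool.false_eq_true, if_false]
        rw [← hbl, ih hpos]
        simp
    · obtain ⟨m, rfl⟩ : ∃ m, l = m + 2 := ⟨l - 2, by omega⟩
      have hb : blocks ((m + 2) :: ls)
          = false :: true :: (List.replicate m true ++ blocks ls) := by
        simp [blocks, List.replicate_succ, show m + 2 - 1 = m + 1 by omega]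
      rw [hb, splitBy_cons_cons]
      simp only [show Rd false true = true from rfl, if_true]
      have hrepl : (true : Bool) :: (List.replicate m true ++ blocks ls)
          = List.replicate (m + 1) true ++ blocks ls := by simp [List.replicate_succ]
      rw [hrepl, splitBy_replicate_append Rd true rfl (m+1) (blocks ls) (by omega) ?_]
      · rw [ih hpos]
        simp [show m + 2 - 1 = m + 1 by omega]
      · intro c hc
        have := blocks_head_ne ls
        cases c
        · rfl
        · exact absurd hc this

theorem blocks_injOn {ls₁ ls₂ : List ℕ} (h₁ : ∀ l ∈ ls₁, 0 < l) (h₂ : ∀ l ∈ ls₂, 0 < l)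
    (h : blocks ls₁ = blocks ls₂) : ls₁ = ls₂ := by
  have e := splitBy_Rd_blocks ls₁ h₁
  rw [h, splitBy_Rd_blocks ls₂ h₂] at e
  have e' := congrArg (List.map List.length) e
  simp only [List.map_map] at e'
  have : ∀ (ls : List ℕ), (∀ l ∈ ls, 0 < l) →
      ls.map (List.length ∘ fun l => false :: List.replicate (l - 1) true) = ls := by
    intro ls hls
    induction ls with
    | nil => rfl
    | cons a as ihh =>
      have := hls a (by simp)
      simp only [List.map_cons, Function.comp_apply, List.length_cons, List.length_replicate]
      rw [ihh (fun x hx => hls x (by simp [hx]))]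
      congr 1
      omega
  rw [this ls₂ h₂, this ls₁ h₁] at e'
  exact e'.symm

theorem build_injOn {ls₁ ls₂ : List ℕ} (h₁ : ∀ l ∈ ls₁, 0 < l) (h₂ : ∀ l ∈ ls₂, 0 < l)
    (h : build false ls₁ = build false ls₂) : ls₁ = ls₂ := by
  have e := runs_build ls₁ false h₁
  rw [show runs (build false ls₁) = runs (build false ls₂) from congrArg _ h,
    runs_build ls₂ false h₂] at e
  have := congrArg (List.map List.length) e
  rw [map_length_bchunks, map_length_bchunks] at this
  exact this.symm

theorem build_surj : ∀ (m : ℕ) (w : List Bool), w.length = m → ∀ b : Bool,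
    w.head? ≠ some (!b) → ∃ ls, (∀ l ∈ ls, 0 < l) ∧ build b ls = w := by
  intro m
  induction m using Nat.strong_induction_on with
  | _ m ih =>
    intro w hw b hb
    cases w with
    | nil => exact ⟨[], by simp, rfl⟩
    | cons c t =>
      have hcb : c = b := by cases c <;> cases b <;> simp_all
      subst hcb
      set u := (c :: t).takeWhile (· == c) with hu
      set v := (c :: t).dropWhile (· == c) with hv
      have huv : u ++ v = c :: t := List.takeWhile_append_dropWhile
      have hurep : u = List.replicate u.length c := by
        rw [List.eq_replicate_iff]
        refine ⟨rfl, fun x hx => ?_⟩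
        have := List.mem_takeWhile_imp hx
        simpa using this
      have hulen : 0 < u.length := by
        rw [hu]
        simp [List.takeWhile_cons]
      have hvhead : v.head? ≠ some c := by
        intro hcon
        have := List.head?_dropWhile_not (· == c) (c :: t)
        rw [← hv] at this
        rw [hcon] at this
        simp at this
      have hvlen : v.length < m := by
        have := congrArg List.length huv
        simp only [List.length_append] at this
        omega
      obtain ⟨ls', hls'⟩ := ih v.length hvlen v rfl (!c)
        (by rw [Bool.not_not]; exact hvhead)
      refine ⟨u.length :: ls', fun l hl => ?_, ?_⟩
      · rcases List.mem_cons.mp hl with h | h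
        · omega
        · exact hls'.1 l h
      · show List.replicate u.length c ++ build (!c) ls' = c :: t
        rw [hls'.2, ← hurep, huv]

theorem blocks_surj : ∀ (m : ℕ) (w : List Bool), w.length = m → w.head? ≠ some true →
    ∃ ls, (∀ l ∈ ls, 0 < l) ∧ blocks ls = w := by
  intro m
  induction m using Nat.strong_induction_on with
  | _ m ih =>
    intro w hw hb
    cases w with
    | nil => exact ⟨[], by simp, rfl⟩
    | cons c t =>
      have hcb : c = false := by cases c <;> simp_all
      subst hcb
      set u := t.takeWhile (· == true) with hu
      set v := t.dropWhile (· == true) with hv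
      have huv : u ++ v = t := List.takeWhile_append_dropWhile
      have hurep : u = List.replicate u.length true := by
        rw [List.eq_replicate_iff]
        refine ⟨rfl, fun x hx => ?_⟩
        have := List.mem_takeWhile_imp hx
        simpa using this
      have hvhead : v.head? ≠ some true := by
        intro hcon
        have := List.head?_dropWhile_not (· == true) t
        rw [← hv] at this
        rw [hcon] at this
        simp at this
      have hvlen : v.length < m := by
        have := congrArg List.length huv
        simp only [List.length_append] at this
        simp only [List.length_cons] at hw
        omega
      obtain ⟨ls', hls'⟩ := ih v.length hvlen v rfl hvhead
      refine ⟨(u.length + 1) :: ls', fun l hl => ?_, ?_⟩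
      · rcases List.mem_cons.mp hl with h | h
        · omega
        · exact hls'.1 l h
      · show (false :: List.replicate (u.length + 1 - 1) true) ++ blocks ls' = false :: t
        rw [hls'.2]
        simp only [Nat.add_sub_cancel, List.cons_append]
        rw [← hurep, huv]

/-- there is a bijection `γ` on the binary words of length `n`
beginning with `0` such that `w` has exactly `k` maximal runs of length `r+1`
iff `γ w` has exactly `k` maximal runs of 1s of length `r`. -/
theorem exists_run_coding_equiv (n : ℕ) :
    ∃ γ : {w : List Bool // w.length = n ∧ w.head? ≠ some true} ≃
          {w : List Bool // w.length = n ∧ w.head? ≠ some true},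
      ∀ r k : ℕ, 1 ≤ r →
        ∀ w : {w : List Bool // w.length = n ∧ w.head? ≠ some true},
          runCount w.val (r + 1) = k ↔ oneRunCount (γ w).val r = k := by
  classical
  let F1 : {ls : List ℕ // (∀ l ∈ ls, 0 < l) ∧ ls.sum = n} →
      {w : List Bool // w.length = n ∧ w.head? ≠ some true} := fun ls =>
    ⟨build false ls.val,
      by rw [build_length]; exact ls.prop.2, build_head_ne ls.val ls.prop.1⟩
  let F2 : {ls : List ℕ // (∀ l ∈ ls, 0 < l) ∧ ls.sum = n} →
      {w : List Bool // w.length = n ∧ w.head? ≠ some true} := fun ls =>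
    ⟨blocks ls.val,
      by rw [blocks_length ls.val ls.prop.1]; exact ls.prop.2, blocks_head_ne ls.val⟩
  have hF1 : Function.Bijective F1 := by
    constructor
    · intro a b hab
      apply Subtype.ext
      exact build_injOn a.prop.1 b.prop.1 (congrArg Subtype.val hab)
    · intro w
      obtain ⟨ls, hpos, hb⟩ := build_surj w.val.length w.val rfl false
        (by simpa using w.prop.2)
      refine ⟨⟨ls, hpos, ?_⟩, Subtype.ext hb⟩
      have := build_length false ls
      rw [hb, w.prop.1] at this
      exact this.symm
  have hF2 : Function.Bijective F2 := by
    constructor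
    · intro a b hab
      apply Subtype.ext
      exact blocks_injOn a.prop.1 b.prop.1 (congrArg Subtype.val hab)
    · intro w
      obtain ⟨ls, hpos, hb⟩ := blocks_surj w.val.length w.val rfl w.prop.2
      refine ⟨⟨ls, hpos, ?_⟩, Subtype.ext hb⟩
      have := blocks_length ls hpos
      rw [hb, w.prop.1] at this
      exact this.symm
  refine ⟨(Equiv.ofBijective F1 hF1).symm.trans (Equiv.ofBijective F2 hF2), ?_⟩
  intro r k hr w
  set ls := (Equiv.ofBijective F1 hF1).symm w with hls
  have hw : F1 ls = w := (Equiv.ofBijective F1 hF1).apply_symm_apply w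
  have hwv : w.val = build false ls.val := by rw [← hw]
  have hγ : ((Equiv.ofBijective F2 hF2) ls).val = blocks ls.val := rfl
  have h1 : runCount w.val (r + 1) = ls.val.count (r + 1) := by
    rw [hwv]
    exact runCount'_build ls.val (r + 1) ls.prop.1
  have h2 : oneRunCount (((Equiv.ofBijective F1 hF1).symm.trans
      (Equiv.ofBijective F2 hF2)) w).val r = ls.val.count (r + 1) := by
    show oneRunCount ((Equiv.ofBijective F2 hF2) ls).val r = _
    rw [hγ]
    exact oneRunCount'_blocks ls.val ls.prop.1 r hr
  rw [h1, h2]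
end

section
/- For every integer n ≥ 1, N(n,1,0) = F(n-1), where F denotes the Fibonacci sequence with F(0) = 0, F(1) = 1, and F(m+2) = F(m+1) + F(m); that is, the number of binary words of length n beginning with 0 having no maximal run of length 1 is the (n-1)-st Fibonacci number. -/
namespace SplitByAux
variable {α : Type*} (r : α → α → Bool)

theorem loop_nil (a : α) (g : List α) (gs : List (List α)) :
    List.splitBy.loop r [] a g gs = ((a :: g).reverse :: gs).reverse := by
  rw [List.splitBy.loop]

theorem loop_pos {a b : α} (l g : List α) (gs : List (List α)) (h : r a b = true) :
    List.splitBy.loop r (b :: l) a g gs = List.splitBy.loop r l b (a :: g) gs := by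
  rw [List.splitBy.loop, h]

theorem loop_neg {a b : α} (l g : List α) (gs : List (List α)) (h : r a b = false) :
    List.splitBy.loop r (b :: l) a g gs = List.splitBy.loop r l b [] ((a :: g).reverse :: gs) := by
  rw [List.splitBy.loop, h]

theorem loop_append : ∀ (l : List α) (a : α) (g : List α) (gs : List (List α)),
    List.splitBy.loop r l a g gs = gs.reverse ++ List.splitBy.loop r l a g [] := by
  intro l
  induction l with
  | nil => intro a g gs; rw [loop_nil, loop_nil]; simp
  | cons b l ih =>
    intro a g gs
    cases hr : r a b with
    | true => rw [loop_pos _ _ _ _ hr, loop_pos _ _ _ _ hr, ih]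
    | false =>
      rw [loop_neg _ _ _ _ hr, loop_neg _ _ _ _ hr, ih,
        ih _ [] [(a :: g).reverse]]
      simp

theorem loop_g : ∀ (l : List α) (a : α) (g : List α),
    List.splitBy.loop r l a g [] =
      (List.splitBy.loop r l a [] []).modifyHead (fun t => g.reverse ++ t) := by
  intro l
  induction l with
  | nil => intro a g; rw [loop_nil, loop_nil]; simp
  | cons b l ih =>
    intro a g
    cases hr : r a b with
    | true =>
      rw [loop_pos _ _ _ _ hr, loop_pos _ _ _ _ hr, ih _ (a :: g), ih _ [a]]
      simp only [List.modifyHead_modifyHead]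
      congr 1
      funext t
      simp
    | false =>
      rw [loop_neg _ _ _ _ hr, loop_neg _ _ _ _ hr,
        loop_append r l b [] [(a :: g).reverse], loop_append r l b [] [[a].reverse]]
      simp

theorem splitBy_cons (a b : α) (l : List α) :
    List.splitBy r (a :: b :: l) =
      if r a b then (List.splitBy r (b :: l)).modifyHead (fun t => a :: t)
      else [a] :: List.splitBy r (b :: l) := by
  show List.splitBy.loop r (b :: l) a [] [] = _
  cases hr : r a b with
  | true =>
    rw [loop_pos _ _ _ _ hr, if_pos rfl, loop_g r l b [a]]
    rfl
  | false =>
    rw [loop_neg _ _ _ _ hr, loop_append r l b [] [[a].reverse]]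
    simp [List.splitBy]

theorem splitBy_singleton (a : α) : List.splitBy r [a] = [[a]] := rfl

end SplitByAux
/-- Pair of predicates: `(AB l).1` = all runs have length ≥ 2;
`(AB l).2` = first run has length 1 and the rest have length ≥ 2. -/
def AB : List Bool → Bool × Bool
  | [] => (true, false)
  | a :: l => ((l.head? == some a) && ((AB l).1 || (AB l).2),
               !(l.head? == some a) && (AB l).1)

def okA (l : List Bool) : Bool := (AB l).1
def okB (l : List Bool) : Bool := (AB l).2

theorem okA_cons (a : Bool) (l : List Bool) :
    okA (a :: l) = ((l.head? == some a) && (okA l || okB l)) := rfl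

theorem okB_cons (a : Bool) (l : List Bool) :
    okB (a :: l) = (!(l.head? == some a) && okA l) := rfl

theorem not_okA_and_okB (l : List Bool) : ¬ (okA l = true ∧ okB l = true) := by
  rintro ⟨hA, hB⟩
  cases l with
  | nil => simp [okB, AB] at hB
  | cons a l =>
    rw [okA_cons] at hA
    rw [okB_cons] at hB
    simp only [Bool.and_eq_true, Bool.not_eq_true'] at hA hB
    rw [hB.1] at hA
    exact absurd hA.1 (by simp)

theorem runs_ne_nil (a : Bool) (l : List Bool) : runs (a :: l) ≠ [] := by
  intro h
  have := List.flatten_splitBy (· == ·) (a :: l)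
  rw [show (a :: l).splitBy (· == ·) = runs (a :: l) from rfl, h] at this
  simp at this

theorem char : ∀ w : List Bool,
    (okA w = true ↔ ∀ g ∈ runs w, g.length ≠ 1) ∧
    (okB w = true ↔ ∃ g gs, runs w = g :: gs ∧ g.length = 1 ∧ ∀ g' ∈ gs, g'.length ≠ 1)
  | [] => by
    constructor
    · simp [okA, AB, runs]
    · simp [okB, AB, runs]
  | [a] => by
    constructor
    · simp [okA, AB, runs, SplitByAux.splitBy_singleton]
    · simp only [okB, AB, runs, SplitByAux.splitBy_singleton]
      simp only [List.head?_nil]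
      constructor
      · intro _; exact ⟨[a], [], rfl, rfl, by simp⟩
      · intro _; rfl
  | a :: b :: l => by
    have ih := char (b :: l)
    obtain ⟨g, gs, hgs⟩ : ∃ g gs, runs (b :: l) = g :: gs := by
      cases h : runs (b :: l) with
      | nil => exact absurd h (runs_ne_nil b l)
      | cons g gs => exact ⟨g, gs, rfl⟩
    have hgne : g ≠ [] := by
      apply List.ne_nil_of_mem_splitBy (r := (· == ·)) (l := b :: l)
      rw [show (b :: l).splitBy (· == ·) = runs (b :: l) from rfl, hgs]
      exact List.mem_cons_self
    have hglen : 1 ≤ g.length := List.length_pos_iff.mpr hgne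
    have hsplit := SplitByAux.splitBy_cons (· == ·) a b l
    rw [show (a :: b :: l).splitBy (· == ·) = runs (a :: b :: l) from rfl,
        show (b :: l).splitBy (· == ·) = runs (b :: l) from rfl] at hsplit
    rw [hgs] at ih hsplit
    by_cases hab : a = b
    · subst hab
      rw [if_pos (by simp)] at hsplit
      simp only [List.modifyHead_cons] at hsplit
      constructor
      · rw [okA_cons, hsplit]
        simp only [List.head?_cons, beq_self_eq_true, Bool.true_and, Bool.or_eq_true]
        rw [ih.1, ih.2]
        constructor
        · rintro (h | ⟨g', gs', hE, h1, h2⟩) g'' hg''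
          · rcases List.mem_cons.mp hg'' with rfl | hg''
            · intro hc; rw [List.length_cons] at hc; omega
            · exact h _ (List.mem_cons_of_mem _ hg'')
          · obtain ⟨rfl, rfl⟩ : g' = g ∧ gs' = gs := by
              constructor <;> [exact (List.cons.injEq .. ▸ hE).1.symm; exact (List.cons.injEq .. ▸ hE).2.symm]
            rcases List.mem_cons.mp hg'' with rfl | hg''
            · intro hc; rw [List.length_cons] at hc; omega
            · exact h2 _ hg''
        · intro h
          by_cases hg1 : g.length = 1
          · exact Or.inr ⟨g, gs, rfl, hg1, fun g' hg' => h _ (List.mem_cons_of_mem _ hg')⟩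
          · exact Or.inl (fun g' hg' => by
              rcases List.mem_cons.mp hg' with rfl | hg'
              · exact hg1
              · exact h _ (List.mem_cons_of_mem _ hg'))
      · rw [okB_cons, hsplit]
        simp only [List.head?_cons, beq_self_eq_true, Bool.not_true, Bool.false_and]
        constructor
        · intro h; exact absurd h (by simp)
        · rintro ⟨g', gs', hE, h1, _⟩
          have : g' = a :: g := (List.cons.injEq .. ▸ hE).1.symm
          rw [this, List.length_cons] at h1
          omega
    · rw [if_neg (by simpa using hab)] at hsplit
      constructor
      · rw [okA_cons, hsplit]
        simp only [List.head?_cons]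
        have : (some b == some a) = false := by
          simp [beq_eq_false_iff_ne]; exact fun h => hab h.symm
        rw [this]
        simp only [Bool.false_and]
        constructor
        · intro h; exact absurd h (by simp)
        · intro h
          exact absurd (h [a] List.mem_cons_self) (by simp)
      · rw [okB_cons, hsplit]
        simp only [List.head?_cons]
        have : (some b == some a) = false := by
          simp [beq_eq_false_iff_ne]; exact fun h => hab h.symm
        rw [this]
        simp only [Bool.not_false, Bool.true_and]
        rw [ih.1]
        constructor
        · intro h
          exact ⟨[a], g :: gs, rfl, rfl, h⟩
        · rintro ⟨g', gs', hE, _, h2⟩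
          have hgs' : gs' = g :: gs := (List.cons.injEq .. ▸ hE).2.symm
          rw [hgs'] at h2
          exact h2
  termination_by w => w.length
theorem okAB_map_not : ∀ l : List Bool,
    okA (l.map not) = okA l ∧ okB (l.map not) = okB l := by
  intro l
  induction l with
  | nil => exact ⟨rfl, rfl⟩
  | cons a l ih =>
    have hopt : ∀ (o : Option Bool) (a : Bool), ((o.map not) == some (!a)) = (o == some a) := by
      decide
    constructor
    · show okA ((!a) :: l.map not) = okA (a :: l)
      rw [okA_cons, okA_cons, List.head?_map, hopt, ih.1, ih.2]
    · show okB ((!a) :: l.map not) = okB (a :: l)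
      rw [okB_cons, okB_cons, List.head?_map, hopt, ih.1]

theorem ofFn_eq_cons {n : ℕ} (w : Fin (n + 1) → Bool) :
    List.ofFn w = w 0 :: List.ofFn (Fin.tail w) := List.ofFn_succ (f := w)

theorem ofFn_cons {n : ℕ} (b : Bool) (w : Fin n → Bool) :
    List.ofFn (Fin.cons b w) = b :: List.ofFn w := by
  rw [ofFn_eq_cons, Fin.cons_zero, Fin.tail_cons]

def cntA (n : ℕ) (b : Bool) : ℕ :=
  Fintype.card {w : Fin n → Bool // (List.ofFn w).head? = some b ∧ okA (List.ofFn w) = true}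

def cntB (n : ℕ) (b : Bool) : ℕ :=
  Fintype.card {w : Fin n → Bool // (List.ofFn w).head? = some b ∧ okB (List.ofFn w) = true}

theorem card_cons (b : Bool) (Q : List Bool → Bool) (n : ℕ) :
    Fintype.card {w : Fin (n + 1) → Bool //
        (List.ofFn w).head? = some b ∧ Q (List.ofFn w) = true} =
    Fintype.card {w : Fin n → Bool // Q (b :: List.ofFn w) = true} := by
  apply Fintype.card_congr
  refine ⟨fun x => ⟨Fin.tail x.1, ?_⟩, fun x => ⟨Fin.cons b x.1, ?_⟩, ?_, ?_⟩
  · obtain ⟨w, h1, h2⟩ := x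
    show Q (b :: List.ofFn (Fin.tail w)) = true
    rw [ofFn_eq_cons w] at h1 h2
    rw [List.head?_cons, Option.some_inj] at h1
    rwa [h1] at h2
  · obtain ⟨w, h⟩ := x
    rw [ofFn_cons]
    exact ⟨rfl, h⟩
  · rintro ⟨w, h1, h2⟩
    apply Subtype.ext
    show Fin.cons b (Fin.tail w) = w
    rw [ofFn_eq_cons w, List.head?_cons, Option.some_inj] at h1
    rw [← h1, Fin.cons_self_tail]
  · rintro ⟨w, h⟩
    apply Subtype.ext
    simp [Fin.tail_cons]

theorem card_or {α : Type*} [Fintype α] (s t : α → Prop)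
    [DecidablePred s] [DecidablePred t] (h : ∀ a, ¬(s a ∧ t a)) :
    Fintype.card {a // s a ∨ t a} = Fintype.card {a // s a} + Fintype.card {a // t a} := by
  classical
  simp only [Fintype.card_subtype]
  rw [← Finset.card_union_of_disjoint]
  · congr 1
    ext a
    simp [Finset.mem_filter, Finset.mem_union]
  · rw [Finset.disjoint_left]
    intro a ha hb
    rw [Finset.mem_filter] at ha hb
    exact h a ⟨ha.2, hb.2⟩

theorem cntA_one (b : Bool) : cntA 1 b = 0 := by
  rw [cntA, card_cons b okA 0]
  rw [Fintype.card_eq_zero_iff]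
  refine ⟨fun x => ?_⟩
  obtain ⟨w, hw⟩ := x
  have e : List.ofFn w = [] := List.ofFn_zero (f := w)
  rw [e] at hw
  have : okA [b] = false := by cases b <;> rfl
  rw [this] at hw
  exact absurd hw (by simp)

theorem cntB_one (b : Bool) : cntB 1 b = 1 := by
  rw [cntB, card_cons b okB 0]
  rw [Fintype.card_eq_one_iff]
  refine ⟨⟨fun i => i.elim0, ?_⟩, ?_⟩
  · have e : List.ofFn (fun i : Fin 0 => (i.elim0 : Bool)) = [] := List.ofFn_zero
    rw [e]
    cases b <;> rfl
  rintro ⟨w, hw⟩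
  apply Subtype.ext
  funext i
  exact i.elim0

theorem cntA_succ_succ (n : ℕ) (b : Bool) :
    cntA (n + 2) b = cntA (n + 1) b + cntB (n + 1) b := by
  rw [cntA, card_cons b okA (n + 1)]
  have key : ∀ w : Fin (n + 1) → Bool, (okA (b :: List.ofFn w) = true) ↔
      (((List.ofFn w).head? = some b ∧ okA (List.ofFn w) = true) ∨
       ((List.ofFn w).head? = some b ∧ okB (List.ofFn w) = true)) := by
    intro w
    rw [okA_cons, Bool.and_eq_true, Bool.or_eq_true, beq_iff_eq, and_or_left]
  rw [Fintype.card_congr (Equiv.subtypeEquivRight key)]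
  rw [card_or]
  · rfl
  · intro w hw
    exact not_okA_and_okB (List.ofFn w) ⟨hw.1.2, hw.2.2⟩

theorem cntB_succ_succ (n : ℕ) (b : Bool) :
    cntB (n + 2) b = cntA (n + 1) (!b) := by
  rw [cntB, card_cons b okB (n + 1)]
  have key : ∀ w : Fin (n + 1) → Bool, (okB (b :: List.ofFn w) = true) ↔
      ((List.ofFn w).head? = some (!b) ∧ okA (List.ofFn w) = true) := by
    intro w
    rw [okB_cons, Bool.and_eq_true, Bool.not_eq_true', beq_eq_false_iff_ne]
    rw [ofFn_eq_cons w, List.head?_cons]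
    constructor
    · rintro ⟨h1, h2⟩
      refine ⟨?_, h2⟩
      rw [Option.some_inj]
      cases hb : w 0 <;> cases b <;> simp_all
    · rintro ⟨h1, h2⟩
      rw [Option.some_inj] at h1
      refine ⟨?_, h2⟩
      intro hc
      rw [Option.some_inj] at hc
      rw [h1] at hc
      cases b <;> simp_all
  rw [Fintype.card_congr (Equiv.subtypeEquivRight key)]
  rfl

theorem cntA_not (n : ℕ) (b : Bool) : cntA n b = cntA n (!b) := by
  apply Fintype.card_congr
  have mapprop : ∀ (c : Bool) (w : Fin n → Bool),
      ((List.ofFn w).head? = some c ∧ okA (List.ofFn w) = true) →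
      ((List.ofFn (fun i => !(w i))).head? = some (!c) ∧
        okA (List.ofFn (fun i => !(w i))) = true) := by
    intro c w ⟨h1, h2⟩
    have e : List.ofFn (fun i => !(w i)) = (List.ofFn w).map not :=
      (List.map_ofFn (f := w) (g := not)).symm
    rw [e, List.head?_map, h1, (okAB_map_not (List.ofFn w)).1]
    exact ⟨rfl, h2⟩
  refine ⟨fun x => ⟨fun i => !(x.1 i), mapprop b x.1 x.2⟩,
          fun x => ⟨fun i => !(x.1 i), ?_⟩, ?_, ?_⟩
  · have := mapprop (!b) x.1 x.2
    rwa [Bool.not_not] at this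
  · rintro ⟨w, h⟩
    apply Subtype.ext
    funext i
    exact Bool.not_not (w i)
  · rintro ⟨w, h⟩
    apply Subtype.ext
    funext i
    exact Bool.not_not (w i)

theorem cntA_fib : ∀ n : ℕ, cntA (n + 1) false = Nat.fib n ∧ cntA (n + 2) false = Nat.fib (n + 1) := by
  intro n
  induction n with
  | zero =>
    refine ⟨by rw [cntA_one]; rfl, ?_⟩
    rw [cntA_succ_succ, cntA_one, cntB_one]
    simp
  | succ n ih =>
    refine ⟨ih.2, ?_⟩
    rw [cntA_succ_succ, ih.2, cntB_succ_succ]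
    have h1 : cntA (n + 1) (!false) = cntA (n + 1) false := by
      exact cntA_not (n + 1) true
    rw [h1, ih.1, Nat.fib_add_two, Nat.add_comm]

theorem runCount_one_eq_zero_iff (l : List Bool) : runCount l 1 = 0 ↔ okA l = true := by
  rw [(char l).1, runCount, List.length_eq_zero_iff, List.filter_eq_nil_iff]
  simp

/-- for `n ≥ 1`, `N(n,1,0)` is the `(n-1)`-st Fibonacci number. -/
theorem N_one_eq_fib (n : ℕ) (hn : 1 ≤ n) : N n 1 0 = Nat.fib (n - 1) := by
  obtain ⟨m, rfl⟩ : ∃ m, n = m + 1 := ⟨n - 1, by omega⟩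
  have key : ∀ w : Fin (m + 1) → Bool,
      ((List.ofFn w).head? ≠ some true ∧ runCount (List.ofFn w) 1 = 0) ↔
      ((List.ofFn w).head? = some false ∧ okA (List.ofFn w) = true) := by
    intro w
    have hh : ((List.ofFn w).head? ≠ some true) ↔ ((List.ofFn w).head? = some false) := by
      rw [ofFn_eq_cons w, List.head?_cons]
      cases w 0 <;> simp
    rw [hh, runCount_one_eq_zero_iff]
  calc N (m + 1) 1 0 = cntA (m + 1) false :=
        Fintype.card_congr (Equiv.subtypeEquivRight key)
    _ = Nat.fib m := (cntA_fib m).1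
    _ = Nat.fib (m + 1 - 1) := by simp
end
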